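/- arXiv:2408.03527 — 2 statements merged into one kernel-verified Lean document; each statement's English description precedes it below -/
import Mathlib

section
/- Let a, b ∈ ℝ^m lie in the same open face of the derived arrangement δA_o, and let I, J, K be any partition of {1,…,m}. Then the polyhedra P(a,I,J,K) and P(b,I,J,K) have the same normal fan, i.e. {N_{P(a,I,J,K)}(x) : x ∈ P(a,I,J,K)} = {N_{P(b,I,J,K)}(y) : y ∈ P(b,I,J,K)} as families of subsets of ℝ^n. -/
open RealInnerProductSpace

noncomputable section

/-- `ℝ^n` with the Euclidean inner product. -/
abbrev Euc (n : ℕ) := EuclideanSpace ℝ (Fin n)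

/-- Standard scalar product on `ℝ^m` (as tuples). -/
def dotm {m : ℕ} (c a : Fin m → ℝ) : ℝ := ∑ i, c i * a i

/-- `C` is a circuit: the family `{u i : i ∈ C}` is linearly dependent but every proper
subfamily is linearly independent. -/
def IsCircuit {n m : ℕ} (u : Fin m → Euc n) (C : Set (Fin m)) : Prop :=
  ¬ LinearIndependent ℝ (fun i : C => u i) ∧
    ∀ D : Set (Fin m), D ⊂ C → LinearIndependent ℝ (fun i : D => u i)

/-- `c` is a circuit vector: `∑ i, c i • u i = 0` and the support of `c` is a circuit. -/
def IsCircuitVector {n m : ℕ} (u : Fin m → Euc n) (c : Fin m → ℝ) : Prop :=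
  (∑ i, c i • u i) = 0 ∧ IsCircuit u {i | c i ≠ 0}

/-- `a` and `b` lie in the same open face of the derived arrangement `δA_o`:
for every circuit vector `c`, `⟨c,a⟩` and `⟨c,b⟩` have the same sign. -/
def SameOpenFace {n m : ℕ} (u : Fin m → Euc n) (a b : Fin m → ℝ) : Prop :=
  ∀ c : Fin m → ℝ, IsCircuitVector u c →
    SignType.sign (dotm c a) = SignType.sign (dotm c b)

/-- `I, J, K` is a partition of `{1,…,m}` into pairwise disjoint (possibly empty) sets. -/
def IsTripartition {m : ℕ} (I J K : Set (Fin m)) : Prop :=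
  I ∪ J ∪ K = Set.univ ∧ Disjoint I J ∧ Disjoint I K ∧ Disjoint J K

/-- The convex polyhedron `P(a,I,J,K)`. -/
def poly {n m : ℕ} (u : Fin m → Euc n) (a : Fin m → ℝ) (I J K : Set (Fin m)) :
    Set (Euc n) :=
  {x | (∀ i ∈ I, ⟪u i, x⟫ = a i) ∧ (∀ j ∈ J, ⟪u j, x⟫ ≤ a j) ∧ (∀ k ∈ K, a k ≤ ⟪u k, x⟫)}

/-- The normal cone of `P` at `x`. -/
def normalCone {n : ℕ} (P : Set (Euc n)) (x : Euc n) : Set (Euc n) :=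
  {v | ∀ y ∈ P, ⟪v, y⟫ ≤ ⟪v, x⟫}

/-- The normal fan of `P`: the family of normal cones at points of `P`. -/
def normalFan {n : ℕ} (P : Set (Euc n)) : Set (Set (Euc n)) :=
  {N | ∃ x ∈ P, N = normalCone P x}

/-- A face of a convex polyhedron: the empty set or an exposed face. -/
def IsFace {n : ℕ} (P F : Set (Euc n)) : Prop :=
  F = ∅ ∨ ∃ v : Euc n, F = {x ∈ P | ∀ y ∈ P, ⟪v, y⟫ ≤ ⟪v, x⟫}

/-- The set of sign vectors of the parallel translation `A_a`. -/
def signSet {n m : ℕ} (u : Fin m → Euc n) (a : Fin m → ℝ) : Set (Fin m → SignType) :=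
  {s | ∃ x : Euc n, ∀ i, s i = SignType.sign (⟪u i, x⟫ - a i)}


open scoped Classical

section Aux

variable {n m : ℕ}


/-- the map x ↦ (⟪u i, x⟫)_i -/
def Mmap (u : Fin m → Euc n) : Euc n →ₗ[ℝ] Euc m where
  toFun x := WithLp.toLp 2 (fun i => ⟪u i, x⟫)
  map_add' x y := by ext i; simp [inner_add_right]
  map_smul' c x := by ext i; simp [inner_smul_right]

def Nmap (u : Fin m → Euc n) : Euc m →ₗ[ℝ] Euc n where
  toFun c := ∑ i, c i • u i
  map_add' x y := by simp [add_smul, Finset.sum_add_distrib]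
  map_smul' c x := by simp [Finset.smul_sum, smul_smul]

lemma inner_eval (c z : Euc m) : ⟪c, z⟫ = ∑ i, c i * z i := by
  simp [PiLp.inner_apply, RCLike.inner_apply, conj_trivial]
  exact Finset.sum_congr rfl (fun i _ => mul_comm _ _)

lemma inner_Mmap (u : Fin m → Euc n) (c : Euc m) (x : Euc n) :
    ⟪c, Mmap u x⟫ = ⟪Nmap u c, x⟫ := by
  simp [inner_eval, Nmap, sum_inner, inner_smul_left, Mmap]

lemma orth_range (u : Fin m → Euc n) :
    (LinearMap.range (Mmap u))ᗮ = LinearMap.ker (Nmap u) := by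
  ext c
  simp only [Submodule.mem_orthogonal, LinearMap.mem_ker, LinearMap.mem_range]
  constructor
  · intro h
    have h2 : ∀ x : Euc n, ⟪Nmap u c, x⟫ = 0 := by
      intro x
      have := h (Mmap u x) ⟨x, rfl⟩
      rwa [real_inner_comm, inner_Mmap] at this
    exact inner_self_eq_zero.mp (h2 (Nmap u c))
  · rintro h v ⟨x, rfl⟩
    rw [real_inner_comm, inner_Mmap, h, inner_zero_left]

lemma range_eq_orth_ker (u : Fin m → Euc n) :
    LinearMap.range (Mmap u) = (LinearMap.ker (Nmap u))ᗮ := by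
  rw [← orth_range, Submodule.orthogonal_orthogonal]

def Fsupp (c : Fin m → ℝ) : Finset (Fin m) := Finset.univ.filter (fun i => c i ≠ 0)

lemma mem_Fsupp {c : Fin m → ℝ} {i : Fin m} : i ∈ Fsupp c ↔ c i ≠ 0 := by simp [Fsupp]

def inK (u : Fin m → Euc n) (c : Fin m → ℝ) : Prop := ∑ i, c i • u i = 0

def subconf (d c : Fin m → ℝ) : Prop := ∀ i, (c i = 0 → d i = 0) ∧ 0 ≤ d i * c i

lemma subconf_refl (c : Fin m → ℝ) : subconf c c :=
  fun i => ⟨fun h => h, mul_self_nonneg _⟩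

lemma subconf_trans {d c' c : Fin m → ℝ} (h1 : subconf d c') (h2 : subconf c' c) :
    subconf d c := by
  intro i
  obtain ⟨h1a, h1b⟩ := h1 i
  obtain ⟨h2a, h2b⟩ := h2 i
  refine ⟨fun h => h1a (h2a h), ?_⟩
  rcases eq_or_ne (c' i) 0 with h | h
  · rw [h1a h]; simp
  · have hsq : 0 < (c' i)^2 := by positivity
    nlinarith [mul_nonneg h1b h2b]

lemma fn_ne_zero_iff {c : Fin m → ℝ} : c ≠ 0 ↔ ∃ i, c i ≠ 0 := by
  rw [Function.ne_iff]; rfl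

lemma exists_minimal (u : Fin m → Euc n) :
    ∀ N : ℕ, ∀ c : Fin m → ℝ, (Fsupp c).card ≤ N → inK u c → c ≠ 0 →
    ∃ g : Fin m → ℝ, inK u g ∧ g ≠ 0 ∧ subconf g c ∧
      ∀ h, inK u h → h ≠ 0 → Fsupp h ⊆ Fsupp g → Fsupp h = Fsupp g := by
  intro N
  induction N with
  | zero =>
    intro c hcard hK hne
    exfalso
    obtain ⟨i, hi⟩ := fn_ne_zero_iff.mp hne
    have : i ∈ Fsupp c := mem_Fsupp.mpr hi
    have := Finset.card_pos.mpr ⟨i, this⟩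
    omega
  | succ N ih =>
    intro c hcard hK hne
    by_cases hmin : ∀ h, inK u h → h ≠ 0 → Fsupp h ⊆ Fsupp c → Fsupp h = Fsupp c
    · exact ⟨c, hK, hne, subconf_refl c, hmin⟩
    · push_neg at hmin
      obtain ⟨h, hhK, hhne, hsub, hneq⟩ := hmin
      have hss : Fsupp h ⊂ Fsupp c := ⟨hsub, fun hh => hneq (le_antisymm hsub hh)⟩
      obtain ⟨i1, hi1⟩ := fn_ne_zero_iff.mp hhne
      have hi1m : i1 ∈ Fsupp h := mem_Fsupp.mpr hi1
      obtain ⟨i0, hi0m, hi0min⟩ :=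
        Finset.exists_min_image (Fsupp h) (fun i => |c i / h i|) ⟨i1, hi1m⟩
      have hhi0 : h i0 ≠ 0 := mem_Fsupp.mp hi0m
      have hci0 : c i0 ≠ 0 := mem_Fsupp.mp (hsub hi0m)
      set t : ℝ := -(c i0 / h i0) with ht
      set c' : Fin m → ℝ := fun i => c i + t * h i with hc'
      -- c' i0 = 0
      have hc'i0 : c' i0 = 0 := by
        simp only [hc', ht]; field_simp; ring
      -- off supp h unchanged
      have hoff : ∀ i, i ∉ Fsupp h → c' i = c i := by
        intro i hi
        have : h i = 0 := by_contra fun hh => hi (mem_Fsupp.mpr hh)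
        simp [hc', this]
      -- subconf c' c
      have hsubc : subconf c' c := by
        intro i
        constructor
        · intro hci
          have : i ∉ Fsupp h := fun him => mem_Fsupp.mp (hsub him) hci
          rw [hoff i this, hci]
        · rcases eq_or_ne (h i) 0 with hh | hh
          · simp [hc', hh, mul_self_nonneg]
          · have him : i ∈ Fsupp h := mem_Fsupp.mpr hh
            have hle := hi0min i him
            have habs : |t| * |h i| ≤ |c i| := by
              have : |t| = |c i0 / h i0| := by rw [ht, abs_neg]
              rw [this]
              calc |c i0 / h i0| * |h i| ≤ |c i / h i| * |h i| := by
                    exact mul_le_mul_of_nonneg_right hle (abs_nonneg _)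
                _ = |c i| := by rw [abs_div, div_mul_cancel₀]; exact abs_ne_zero.mpr hh
            have h1 : |t * h i| ≤ |c i| := by rw [abs_mul]; exact habs
            have h2 : -(|c i| * |c i|) ≤ t * h i * c i := by
              have := neg_abs_le (t * h i * c i)
              have h3 : |t * h i * c i| ≤ |c i| * |c i| := by
                rw [abs_mul]
                exact mul_le_mul_of_nonneg_right h1 (abs_nonneg _)
              nlinarith
            have h4 : |c i| * |c i| = c i * c i := abs_mul_abs_self _
            simp only [hc']
            nlinarith
      -- support shrinks
      have hsupp' : Fsupp c' ⊆ (Fsupp c).erase i0 := by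
        intro i hi
        have hci' : c' i ≠ 0 := mem_Fsupp.mp hi
        have hinec : c i ≠ 0 := by
          intro hci; exact hci' ((hsubc i).1 hci)
        refine Finset.mem_erase.mpr ⟨?_, mem_Fsupp.mpr hinec⟩
        intro hii; exact hci' (hii ▸ hc'i0)
      have hcard' : (Fsupp c').card ≤ N := by
        have h1 : (Fsupp c').card ≤ ((Fsupp c).erase i0).card := Finset.card_le_card hsupp'
        have h2 : ((Fsupp c).erase i0).card < (Fsupp c).card :=
          Finset.card_erase_lt_of_mem (hsub hi0m)
        omega
      -- c' nonzero
      obtain ⟨j, hjc, hjh⟩ := Finset.exists_of_ssubset hss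
      have hc'ne : c' ≠ 0 := by
        rw [fn_ne_zero_iff]
        exact ⟨j, by rw [hoff j hjh]; exact mem_Fsupp.mp hjc⟩
      -- c' in kernel
      have hc'K : inK u c' := by
        unfold inK at *
        have : ∑ i, c' i • u i = (∑ i, c i • u i) + t • ∑ i, h i • u i := by
          rw [Finset.smul_sum, ← Finset.sum_add_distrib]
          congr 1; funext i; simp [hc', add_smul, smul_smul]
        rw [this, hK, hhK, smul_zero, add_zero]
      obtain ⟨g, hgK, hgne, hgsub, hgmin⟩ := ih c' hcard' hc'K hc'ne
      exact ⟨g, hgK, hgne, subconf_trans hgsub hsubc, hgmin⟩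

-- helper : sum over a set-subtype equals the full sum when the function vanishes off the set
lemma sum_subtype_eq (S : Set (Fin m)) [Fintype S] (f : Fin m → Euc n)
    (hf : ∀ i, i ∉ S → f i = 0) : ∑ i : S, f i = ∑ i, f i := by
  rw [Finset.sum_set_coe (f := f)]
  refine Finset.sum_subset (Finset.subset_univ _) ?_
  intro i _ hi
  exact hf i (by simpa [Set.mem_toFinset] using hi)

lemma circuit_of_minimal (u : Fin m → Euc n) (g : Fin m → ℝ) (hK : inK u g) (hne : g ≠ 0)
    (hmin : ∀ h, inK u h → h ≠ 0 → Fsupp h ⊆ Fsupp g → Fsupp h = Fsupp g) :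
    IsCircuitVector u g := by
  refine ⟨hK, ?_, ?_⟩
  · -- dependent
    intro hli
    set S : Set (Fin m) := {i | g i ≠ 0} with hS
    have hsum : ∑ i : S, g (i : Fin m) • u (i : Fin m) = 0 := by
      rw [sum_subtype_eq S (fun i => g i • u i) (fun i hi => by
        simp only [hS, Set.mem_setOf_eq, not_not] at hi; simp [hi])]
      exact hK
    have := Fintype.linearIndependent_iff.mp hli (fun i : S => g i) hsum
    obtain ⟨i, hi⟩ := Function.ne_iff.mp hne
    exact hi (by simpa using this ⟨i, hi⟩)
  · -- minimality
    intro D hD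
    by_contra hnli
    obtain ⟨lam, hlsum, i₀, hi₀⟩ := Fintype.not_linearIndependent_iff.mp hnli
    set h : Fin m → ℝ := fun i => if hi : i ∈ D then lam ⟨i, hi⟩ else 0 with hh
    have hhK : inK u h := by
      unfold inK
      rw [← sum_subtype_eq D (fun i => h i • u i) (fun i hi => by simp [hh, hi])]
      rw [← hlsum]
      refine Finset.sum_congr rfl ?_
      intro i _
      simp [hh, i.2]
    have hhne : h ≠ 0 := by
      rw [Function.ne_iff]
      exact ⟨i₀, by simpa [hh, i₀.2] using hi₀⟩
    have hsub : Fsupp h ⊆ Fsupp g := by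
      intro i hi
      have : h i ≠ 0 := mem_Fsupp.mp hi
      have hiD : i ∈ D := by by_contra hiD; simp [hh, hiD] at this
      exact mem_Fsupp.mpr (hD.1 hiD)
    have heq := hmin h hhK hhne hsub
    obtain ⟨j, hjS, hjD⟩ := Set.exists_of_ssubset hD
    have : j ∈ Fsupp h := heq ▸ mem_Fsupp.mpr hjS
    exact hjD (by by_contra hc; simp [hh, hc] at this; exact (mem_Fsupp.mp ‹j ∈ Fsupp h›) (by simp [hh, hc]))

lemma smul_circuitVector {u : Fin m → Euc n} {g : Fin m → ℝ} {t : ℝ} (ht : t ≠ 0)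
    (hg : IsCircuitVector u g) : IsCircuitVector u (fun i => t * g i) := by
  obtain ⟨hsum, hcirc⟩ := hg
  constructor
  · have : ∑ i, (t * g i) • u i = t • ∑ i, g i • u i := by
      rw [Finset.smul_sum]; congr 1; funext i; rw [smul_smul]
    rw [this, hsum, smul_zero]
  · have : {i | t * g i ≠ 0} = {i | g i ≠ 0} := by
      ext i; simp [ht, mul_ne_zero_iff]
    rwa [this]

lemma decomp (u : Fin m → Euc n) :
    ∀ N : ℕ, ∀ c : Fin m → ℝ, (Fsupp c).card ≤ N → inK u c →
    ∃ L : List (Fin m → ℝ), (∀ d ∈ L, IsCircuitVector u d ∧ subconf d c) ∧ L.sum = c := by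
  intro N
  induction N with
  | zero =>
    intro c hcard hK
    have : c = 0 := by
      funext i
      by_contra hi
      have := Finset.card_pos.mpr ⟨i, mem_Fsupp.mpr hi⟩
      omega
    exact ⟨[], by simp, by simp [this]⟩
  | succ N ih =>
    intro c hcard hK
    rcases eq_or_ne c 0 with hc0 | hc0
    · exact ⟨[], by simp, by simp [hc0]⟩
    obtain ⟨g, hgK, hgne, hgsub, hgmin⟩ := exists_minimal u (N+1) c hcard hK hc0
    have hgcirc := circuit_of_minimal u g hgK hgne hgmin
    obtain ⟨i1, hi1⟩ := fn_ne_zero_iff.mp hgne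
    have hi1m : i1 ∈ Fsupp g := mem_Fsupp.mpr hi1
    -- ratios positive
    have hrat : ∀ i ∈ Fsupp g, 0 < c i / g i := by
      intro i hi
      have hgi : g i ≠ 0 := mem_Fsupp.mp hi
      have hci : c i ≠ 0 := fun h => hgi ((hgsub i).1 h)
      have := (hgsub i).2
      have hpos : 0 < g i * c i := lt_of_le_of_ne this (fun h => hci (by
        rcases mul_eq_zero.mp h.symm with h' | h'
        · exact absurd h' hgi
        · exact h'))
      have heq : c i / g i = (g i * c i) / (g i)^2 := by
        field_simp
      rw [heq]
      exact div_pos hpos (by positivity)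
    obtain ⟨i0, hi0m, hi0min⟩ :=
      Finset.exists_min_image (Fsupp g) (fun i => c i / g i) ⟨i1, hi1m⟩
    set t : ℝ := c i0 / g i0 with ht
    have htpos : 0 < t := hrat i0 hi0m
    set c' : Fin m → ℝ := fun i => c i - t * g i with hc'
    have hgi0 : g i0 ≠ 0 := mem_Fsupp.mp hi0m
    have hc'i0 : c' i0 = 0 := by simp only [hc', ht]; field_simp; ring
    have hoff : ∀ i, i ∉ Fsupp g → c' i = c i := by
      intro i hi
      have : g i = 0 := by_contra fun hh => hi (mem_Fsupp.mpr hh)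
      simp [hc', this]
    have hsubc : subconf c' c := by
      intro i
      rcases eq_or_ne (g i) 0 with hg0 | hg0
      · constructor
        · intro hci; simp [hc', hg0, hci]
        · simp [hc', hg0, mul_self_nonneg]
      · have him : i ∈ Fsupp g := mem_Fsupp.mpr hg0
        have hci : c i ≠ 0 := fun h => hg0 ((hgsub i).1 h)
        have hle := hi0min i him
        have hgc : 0 < g i * c i := by
          have := (hgsub i).2
          exact lt_of_le_of_ne this (fun h => hci (by
            rcases mul_eq_zero.mp h.symm with h' | h'
            · exact absurd h' hg0
            · exact h'))
        constructor
        · intro h; exact absurd h hci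
        · -- c' i * c i = c i ^ 2 - t * (g i * c i) ≥ c i ^2 - (c i / g i) * (g i * c i) = 0
          have key : t * (g i * c i) ≤ (c i / g i) * (g i * c i) :=
            mul_le_mul_of_nonneg_right (le_trans (hi0min i him) (le_refl _)) (le_of_lt hgc)
          have keq : (c i / g i) * (g i * c i) = c i * c i := by field_simp
          simp only [hc']
          nlinarith
    have hsupp' : Fsupp c' ⊆ (Fsupp c).erase i0 := by
      intro i hi
      have hci' : c' i ≠ 0 := mem_Fsupp.mp hi
      have hcine : c i ≠ 0 := fun h => hci' ((hsubc i).1 h)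
      refine Finset.mem_erase.mpr ⟨fun hii => hci' (hii ▸ hc'i0), mem_Fsupp.mpr hcine⟩
    have hcard' : (Fsupp c').card ≤ N := by
      have h1 := Finset.card_le_card hsupp'
      have hci0 : c i0 ≠ 0 := fun h => hgi0 ((hgsub i0).1 h)
      have h2 := Finset.card_erase_lt_of_mem (mem_Fsupp.mpr hci0)
      omega
    have hc'K : inK u c' := by
      unfold inK at *
      have : ∑ i, c' i • u i = (∑ i, c i • u i) - t • ∑ i, g i • u i := by
        rw [Finset.smul_sum, ← Finset.sum_sub_distrib]
        congr 1; funext i; simp [hc', sub_smul, smul_smul]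
      rw [this, hK, hgK, smul_zero, sub_zero]
    obtain ⟨L', hL', hLsum⟩ := ih c' hcard' hc'K
    refine ⟨(fun i => t * g i) :: L', ?_, ?_⟩
    · intro d hd
      rcases List.mem_cons.mp hd with rfl | hd'
      · refine ⟨smul_circuitVector (ne_of_gt htpos) hgcirc, ?_⟩
        intro i
        constructor
        · intro h; show t * g i = 0; rw [(hgsub i).1 h, mul_zero]
        · have := (hgsub i).2
          show 0 ≤ t * g i * c i
          calc (0:ℝ) ≤ t * (g i * c i) := mul_nonneg (le_of_lt htpos) this
            _ = t * g i * c i := by ring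
      · obtain ⟨h1, h2⟩ := hL' d hd'
        exact ⟨h1, subconf_trans h2 hsubc⟩
    · rw [List.sum_cons, hLsum]
      funext i
      simp [hc']

lemma inK_iff (u : Fin m → Euc n) (c : Euc m) : inK u c ↔ Nmap u c = 0 := Iff.rfl
lemma dotm_eq_inner (c b : Euc m) : dotm c b = ⟪c, b⟫ := (inner_eval c b).symm

/-- The submodule of vectors vanishing on the zero set of `s`. -/
def Esub (s : Fin m → SignType) : Submodule ℝ (Euc m) where
  carrier := {z | ∀ i, s i = 0 → z i = 0}
  zero_mem' := fun i _ => rfl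
  add_mem' := by intro x y hx hy i hi; simp [PiLp.add_apply, hx i hi, hy i hi]
  smul_mem' := by intro c x hx i hi; simp [PiLp.smul_apply, hx i hi]

lemma mem_Esub {s : Fin m → SignType} {z : Euc m} :
    z ∈ Esub s ↔ ∀ i, s i = 0 → z i = 0 := Iff.rfl

lemma mem_Esub_orth {s : Fin m → SignType} {c : Euc m} :
    c ∈ (Esub s)ᗮ ↔ ∀ i, s i ≠ 0 → c i = 0 := by
  rw [Submodule.mem_orthogonal]
  constructor
  · intro hc i hi
    have hmem : EuclideanSpace.single i (1:ℝ) ∈ Esub s := by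
      intro j hj
      have hne : j ≠ i := fun h => hi (h ▸ hj)
      simp [EuclideanSpace.single_apply, hne]
    have := hc _ hmem
    rwa [EuclideanSpace.inner_single_left, conj_trivial, one_mul] at this
  · intro hc z hz
    rw [inner_eval]
    refine Finset.sum_eq_zero (fun i _ => ?_)
    by_cases hi : s i = 0
    · rw [hz i hi, zero_mul]
    · rw [hc i hi, mul_zero]

lemma le_of_small_steps {F G u0 : ℝ} (h : ∀ t : ℝ, 0 < t → t ≤ 1 → F + t * G < u0) : F ≤ u0 := by
  by_contra hgt
  push_neg at hgt
  set t0 : ℝ := min 1 ((F - u0) / (|G| + 1)) with ht0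
  have habs : 0 < (F - u0) / (|G| + 1) := div_pos (by linarith) (by positivity)
  have ht0pos : 0 < t0 := lt_min one_pos habs
  have ht0le : t0 ≤ 1 := min_le_left _ _
  have hkey := h t0 ht0pos ht0le
  have h2 : t0 * |G| ≤ (F - u0) / (|G| + 1) * |G| :=
    mul_le_mul_of_nonneg_right (min_le_right _ _) (abs_nonneg _)
  have h3 : (F - u0) / (|G| + 1) * |G| < F - u0 := by
    rw [div_mul_eq_mul_div, div_lt_iff₀ (by positivity)]
    nlinarith [abs_nonneg G]
  have h4 : t0 * (-(|G|)) ≤ t0 * G :=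
    mul_le_mul_of_nonneg_left (neg_abs_le G) (le_of_lt ht0pos)
  nlinarith [h2, h3, h4, hkey, hgt]

lemma exists_cert (u : Fin m → Euc n) (b : Fin m → ℝ) (s : Fin m → SignType)
    (h : ¬ ∃ y : Euc n, ∀ i, s i = SignType.sign (⟪u i, y⟫ - b i)) :
    ∃ c : Fin m → ℝ, inK u c ∧ (∀ i, s i = 1 → c i ≤ 0) ∧ (∀ i, s i = -1 → 0 ≤ c i) ∧
      dotm c b ≤ 0 ∧ (dotm c b < 0 ∨ ∃ i, s i ≠ 0 ∧ c i ≠ 0) := by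
  set W := LinearMap.range (Mmap u) with hW
  set E := Esub s with hE
  set bE : Euc m := WithLp.toLp 2 b with hbE
  by_cases hbWE : bE ∈ W ⊔ E
  case neg =>
    -- b is not even reachable on the zero coordinates
    have hb' : ¬ ∀ c ∈ (W ⊔ E)ᗮ, ⟪c, bE⟫ = 0 := by
      intro hc
      exact hbWE (by
        have : bE ∈ (W ⊔ E)ᗮᗮ := by
          rw [Submodule.mem_orthogonal]
          intro v hv
          exact hc v hv
        rwa [Submodule.orthogonal_orthogonal] at this)
    push_neg at hb'
    obtain ⟨c0, hc0mem, hc0⟩ := hb'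
    have key : ∀ c : Euc m, c ∈ (W ⊔ E)ᗮ → ⟪c, bE⟫ < 0 →
        ∃ c : Fin m → ℝ, inK u c ∧ (∀ i, s i = 1 → c i ≤ 0) ∧ (∀ i, s i = -1 → 0 ≤ c i) ∧
        dotm c b ≤ 0 ∧ (dotm c b < 0 ∨ ∃ i, s i ≠ 0 ∧ c i ≠ 0) := by
      intro c hcmem hcb
      have hcW : c ∈ Wᗮ := Submodule.orthogonal_le le_sup_left hcmem
      have hcE : c ∈ Eᗮ := Submodule.orthogonal_le le_sup_right hcmem
      have hcK : inK u c := by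
        rw [inK_iff]
        have := (orth_range u) ▸ hcW
        exact LinearMap.mem_ker.mp this
      have hzero : ∀ i, s i ≠ 0 → c i = 0 := mem_Esub_orth.mp hcE
      refine ⟨c, hcK, ?_, ?_, ?_, ?_⟩
      · intro i hi; rw [hzero i (by simp [hi])]
      · intro i hi; rw [hzero i (by simp [hi])]
      · rw [dotm_eq_inner]; exact le_of_lt hcb
      · left; rw [dotm_eq_inner]; exact hcb
    rcases lt_or_gt_of_ne hc0 with hlt | hgt
    · exact key c0 hc0mem hlt
    · refine key (-c0) (Submodule.neg_mem _ hc0mem) ?_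
      rw [inner_neg_left]; linarith
  case pos =>
    obtain ⟨z0, hz0W, e0, he0E, hze⟩ := Submodule.mem_sup.mp hbWE
    have hz0b : ∀ i, s i = 0 → z0 i = b i := by
      intro i hi
      have : z0 i + e0 i = b i := congrFun (congrArg (fun (v : Euc m) => (v : Fin m → ℝ)) hze) i
      rw [mem_Esub.mp he0E i hi] at this; linarith [this]
    -- the open set U and the affine set A'
    set U : Set (Euc m) := {z | ∀ i, (s i = 1 → b i < z i) ∧ (s i = -1 → z i < b i)} with hU
    set A : Set (Euc m) := {z | z ∈ W ∧ ∀ i, s i = 0 → z i = b i} with hA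
    have hUopen : IsOpen U := by
      have : U = ⋂ i, ({z : Euc m | s i = 1 → b i < z i} ∩ {z : Euc m | s i = -1 → z i < b i}) := by
        ext z; simp [hU, Set.mem_iInter, forall_and]
      rw [this]
      refine isOpen_iInter_of_finite (fun i => IsOpen.inter ?_ ?_)
      · by_cases hi : s i = 1
        · have : {z : Euc m | s i = 1 → b i < z i} = {z : Euc m | b i < z i} := by
            ext z; simp [hi]
          rw [this]
          exact isOpen_lt continuous_const (EuclideanSpace.proj i).continuous
        · have : {z : Euc m | s i = 1 → b i < z i} = Set.univ := by
            ext z; simp [hi]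
          rw [this]; exact isOpen_univ
      · by_cases hi : s i = -1
        · have : {z : Euc m | s i = -1 → z i < b i} = {z : Euc m | z i < b i} := by
            ext z; simp [hi]
          rw [this]
          exact isOpen_lt (EuclideanSpace.proj i).continuous continuous_const
        · have : {z : Euc m | s i = -1 → z i < b i} = Set.univ := by
            ext z; simp [hi]
          rw [this]; exact isOpen_univ
    have hUconv : Convex ℝ U := by
      intro z1 h1 z2 h2 p q hp hq hpq
      intro i
      have e1 : (p • z1 + q • z2 : Euc m) i = p * z1 i + q * z2 i := rfl
      constructor
      · intro hi
        rw [e1]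
        have hb' : b i = p * b i + q * b i := by rw [← add_mul, hpq, one_mul]
        rw [hb']
        rcases eq_or_lt_of_le hp with hp0 | hp0
        · simp only [← hp0, zero_mul, zero_add]
          have hq1 : q = 1 := by linarith
          simpa [hq1] using (h2 i).1 hi
        · rcases eq_or_lt_of_le hq with hq0 | hq0
          · simp only [← hq0, zero_mul, add_zero]
            have hp1 : p = 1 := by linarith
            simpa [hp1] using (h1 i).1 hi
          · exact add_lt_add (by nlinarith [(h1 i).1 hi]) (by nlinarith [(h2 i).1 hi])
      · intro hi
        rw [e1]
        have hb' : b i = p * b i + q * b i := by rw [← add_mul, hpq, one_mul]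
        rw [hb']
        rcases eq_or_lt_of_le hp with hp0 | hp0
        · simp only [← hp0, zero_mul, zero_add]
          have hq1 : q = 1 := by linarith
          simpa [hq1] using (h2 i).2 hi
        · rcases eq_or_lt_of_le hq with hq0 | hq0
          · simp only [← hq0, zero_mul, add_zero]
            have hp1 : p = 1 := by linarith
            simpa [hp1] using (h1 i).2 hi
          · exact add_lt_add (by nlinarith [(h1 i).2 hi]) (by nlinarith [(h2 i).2 hi])
    have hAconv : Convex ℝ A := by
      intro z1 h1 z2 h2 p q hp hq hpq
      refine ⟨Submodule.add_mem _ (Submodule.smul_mem _ _ h1.1) (Submodule.smul_mem _ _ h2.1), ?_⟩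
      intro i hi
      have e1 : (p • z1 + q • z2 : Euc m) i = p * z1 i + q * z2 i := rfl
      rw [e1, h1.2 i hi, h2.2 i hi, ← add_mul, hpq, one_mul]
    have hdisj : Disjoint U A := by
      rw [Set.disjoint_left]
      intro z hzU hzA
      obtain ⟨x, hx⟩ := hzA.1
      refine h ⟨x, fun i => ?_⟩
      have hxz : ⟪u i, x⟫ = z i := congrFun (congrArg (fun (v : Euc m) => (v : Fin m → ℝ)) hx) i
      cases hsi : s i with
      | zero =>
        have hzb : z i = b i := hzA.2 i hsi
        rw [hxz, hzb, sub_self, sign_zero]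
        rfl
      | pos =>
        have hlt : b i < z i := (hzU i).1 hsi
        rw [hxz]
        exact (sign_eq_one_iff.mpr (by linarith)).symm
      | neg =>
        have hlt : z i < b i := (hzU i).2 hsi
        rw [hxz]
        exact (sign_eq_neg_one_iff.mpr (by linarith)).symm
    -- z0 lies in A
    have hz0A : z0 ∈ A := ⟨hz0W, hz0b⟩
    -- separate
    obtain ⟨f, u0, hfU, hfA⟩ := geometric_hahn_banach_open hUconv hUopen hAconv hdisj
    set ct : Euc m := (InnerProductSpace.toDual ℝ (Euc m)).symm f with hct
    have hctf : ∀ z : Euc m, ⟪ct, z⟫ = f z := fun z =>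
      InnerProductSpace.toDual_symm_apply
    -- basic point of U
    set zU : Euc m := WithLp.toLp 2 (fun i => if s i = 1 then b i + 1 else if s i = -1 then b i - 1 else b i :
      Fin m → ℝ) with hzU'
    have hzUU : zU ∈ U := by
      intro i
      constructor
      · intro hi
        have : zU i = b i + 1 := by simp [hzU', hi]
        rw [this]; linarith
      · intro hi
        have : zU i = b i - 1 := by
          have h1 : s i ≠ 1 := by rw [hi]; decide
          simp [hzU', hi, h1]
        rw [this]; linarith
    -- f is constant along directions of W ⊓ E
    have hconst : ∀ d : Euc m, d ∈ W → d ∈ E → f d = 0 := by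
      intro d hdW hdE
      by_contra hfd
      have hmem : ∀ t : ℝ, z0 + t • d ∈ A := by
        intro t
        refine ⟨Submodule.add_mem _ hz0W (Submodule.smul_mem _ _ hdW), ?_⟩
        intro i hi
        have e1 : (z0 + t • d : Euc m) i = z0 i + t * d i := rfl
        rw [e1, mem_Esub.mp hdE i hi, mul_zero, add_zero, hz0b i hi]
      have hge : ∀ t : ℝ, u0 ≤ f z0 + t * f d := by
        intro t
        have := hfA _ (hmem t)
        rwa [map_add, map_smul, smul_eq_mul] at this
      have := hge ((u0 - 1 - f z0) / f d)
      rw [div_mul_cancel₀ _ hfd] at this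
      linarith
    have hctWE : ct ∈ (W ⊓ E)ᗮ := by
      rw [Submodule.mem_orthogonal]
      intro v hv
      rw [real_inner_comm, hctf]
      exact hconst v hv.1 hv.2
    -- identify the orthogonal of the intersection
    have horth : (W ⊓ E)ᗮ = Wᗮ ⊔ Eᗮ := by
      have h1 : Wᗮᗮ ⊓ Eᗮᗮ = (Wᗮ ⊔ Eᗮ)ᗮ := Submodule.inf_orthogonal _ _
      rw [Submodule.orthogonal_orthogonal, Submodule.orthogonal_orthogonal] at h1
      rw [h1, Submodule.orthogonal_orthogonal]
    rw [horth] at hctWE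
    obtain ⟨c, hcW, e, heE, hce⟩ := Submodule.mem_sup.mp hctWE
    have hcK : inK u c := by
      rw [inK_iff]
      have := (orth_range u) ▸ hcW
      exact LinearMap.mem_ker.mp this
    have heZ : ∀ i, s i ≠ 0 → e i = 0 := mem_Esub_orth.mp heE
    have hci : ∀ i, s i ≠ 0 → c i = ct i := by
      intro i hi
      have : c i + e i = ct i := congrFun (congrArg (fun (v : Euc m) => (v : Fin m → ℝ)) hce) i
      rw [heZ i hi] at this; linarith [this]
    have hctcoord : ∀ i : Fin m, ct i = f (EuclideanSpace.single i (1:ℝ)) := by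
      intro i
      rw [← hctf]
      rw [EuclideanSpace.inner_single_right, conj_trivial, one_mul]
    -- sign conditions on f of the basis vectors
    have hsign1 : ∀ i, s i = 1 → f (EuclideanSpace.single i (1:ℝ)) ≤ 0 := by
      intro i hi
      by_contra hpos
      push_neg at hpos
      have hmem : ∀ t : ℝ, 0 ≤ t → zU + t • EuclideanSpace.single i (1:ℝ) ∈ U := by
        intro t ht j
        have e1 : (zU + t • EuclideanSpace.single i (1:ℝ) : Euc m) j
            = zU j + t * (if j = i then 1 else 0) := by
          simp [EuclideanSpace.single_apply]
        constructor
        · intro hj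
          rw [e1]
          have := (hzUU j).1 hj
          by_cases hji : j = i
          · subst hji
            rw [if_pos rfl, mul_one]
            linarith
          · rw [if_neg hji, mul_zero, add_zero]; exact this
        · intro hj
          have hji : j ≠ i := by intro hji; rw [hji, hi] at hj; exact absurd hj (by decide)
          rw [e1]
          simp only [if_neg hji, mul_zero, add_zero]
          exact (hzUU j).2 hj
      have hlt : ∀ t : ℝ, 0 ≤ t → f zU + t * f (EuclideanSpace.single i 1) < u0 := by
        intro t ht
        have := hfU _ (hmem t ht)
        rwa [map_add, map_smul, smul_eq_mul] at this
      have h1 := hlt ((u0 + 1 - f zU) / f (EuclideanSpace.single i 1)) (by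
        have h2 := hlt 0 le_rfl
        rw [zero_mul, add_zero] at h2
        exact le_of_lt (div_pos (by linarith) hpos))
      rw [div_mul_cancel₀ _ (ne_of_gt hpos)] at h1
      linarith
    have hsignm1 : ∀ i, s i = -1 → 0 ≤ f (EuclideanSpace.single i (1:ℝ)) := by
      intro i hi
      by_contra hneg
      push_neg at hneg
      have hmem : ∀ t : ℝ, 0 ≤ t → zU - t • EuclideanSpace.single i (1:ℝ) ∈ U := by
        intro t ht j
        have e1 : (zU - t • EuclideanSpace.single i (1:ℝ) : Euc m) j
            = zU j - t * (if j = i then 1 else 0) := by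
          simp [EuclideanSpace.single_apply]
        constructor
        · intro hj
          have hji : j ≠ i := by intro hji; rw [hji, hi] at hj; exact absurd hj (by decide)
          rw [e1]
          simp only [if_neg hji, mul_zero, sub_zero]
          exact (hzUU j).1 hj
        · intro hj
          rw [e1]
          by_cases hji : j = i
          · subst hji
            rw [if_pos rfl, mul_one]
            linarith [(hzUU j).2 hj]
          · rw [if_neg hji, mul_zero, sub_zero]
            exact (hzUU j).2 hj
      have hlt : ∀ t : ℝ, 0 ≤ t → f zU - t * f (EuclideanSpace.single i 1) < u0 := by
        intro t ht
        have := hfU _ (hmem t ht)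
        rwa [map_sub, map_smul, smul_eq_mul] at this
      have h1 := hlt ((f zU - u0 - 1) / f (EuclideanSpace.single i 1)) (by
        have h2 := hlt 0 le_rfl
        rw [zero_mul, sub_zero] at h2
        have : f zU - u0 - 1 < 0 := by linarith
        exact le_of_lt (div_pos_of_neg_of_neg this hneg))
      rw [div_mul_cancel₀ _ (ne_of_lt hneg)] at h1
      linarith
    -- f b ≤ u0
    have hfb : f bE ≤ u0 := by
      by_contra hgt
      push_neg at hgt
      set w : Euc m := zU - bE with hw
      have hwc : ∀ i : Fin m, w i = zU i - b i := fun i => rfl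
      have hmem : ∀ t : ℝ, 0 < t → t ≤ 1 → bE + t • w ∈ U := by
        intro t ht ht1 i
        have e1 : (bE + t • w : Euc m) i = b i + t * (zU i - b i) := rfl
        constructor
        · intro hi
          rw [e1]
          have hzi : zU i = b i + 1 := by simp [hzU', hi]
          rw [hzi]
          have hr : b i + t * (b i + 1 - b i) = b i + t := by ring
          rw [hr]
          linarith only [ht]
        · intro hi
          rw [e1]
          have h1 : s i ≠ 1 := by rw [hi]; decide
          have hzi : zU i = b i - 1 := by simp [hzU', hi, h1]
          rw [hzi]
          have hr : b i + t * (b i - 1 - b i) = b i - t := by ring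
          rw [hr]
          linarith only [ht]
      have hlt : ∀ t : ℝ, 0 < t → t ≤ 1 → f bE + t * f w < u0 := by
        intro t ht ht1
        have := hfU _ (hmem t ht ht1)
        rwa [map_add, map_smul, smul_eq_mul] at this
      exact absurd (le_of_small_steps hlt) (not_le.mpr hgt)
    -- assemble the certificate
    refine ⟨c, hcK, ?_, ?_, ?_, ?_⟩
    · intro i hi
      rw [hci i (by rw [hi]; decide), hctcoord i]
      exact hsign1 i hi
    · intro i hi
      rw [hci i (by rw [hi]; decide), hctcoord i]
      exact hsignm1 i hi
    · have hsplit : dotm c bE = f bE - f z0 := by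
        rw [dotm_eq_inner]
        have h1 : ⟪(c : Euc m), z0⟫ = 0 := (Submodule.mem_orthogonal' W c).mp hcW z0 hz0W
        have h2 : ⟪(c : Euc m), (bE : Euc m)⟫ = ⟪(c : Euc m), bE - z0⟫ + ⟪(c : Euc m), z0⟫ := by
          rw [inner_sub_right]; ring
        have h3 : ⟪(c : Euc m), bE - z0⟫ = ⟪ct, bE - z0⟫ := by
          rw [inner_eval, inner_eval]
          refine Finset.sum_congr rfl (fun i _ => ?_)
          by_cases hi : s i = 0
          · have hz : (bE - z0 : Euc m) i = 0 := by
              show b i - z0 i = 0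
              rw [hz0b i hi]; ring
            rw [hz, mul_zero, mul_zero]
          · rw [hci i hi]
        rw [h2, h1, add_zero, h3, hctf, map_sub]
      rw [hsplit]
      have := hfA z0 hz0A
      linarith only [this, hfb]
    · by_cases hcz : ∃ i, s i ≠ 0 ∧ c i ≠ 0
      · right; exact hcz
      · exfalso
        push_neg at hcz
        set z2 : Euc m := WithLp.toLp 2 (fun i => if s i = 0 then z0 i else zU i : Fin m → ℝ) with hz2
        have hz2U : z2 ∈ U := by
          intro i
          constructor
          · intro hi
            have hne : s i ≠ 0 := by rw [hi]; decide
            have hz2i : z2 i = zU i := by simp [hz2, hne]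
            rw [hz2i]
            exact (hzUU i).1 hi
          · intro hi
            have hne : s i ≠ 0 := by rw [hi]; decide
            have hz2i : z2 i = zU i := by simp [hz2, hne]
            rw [hz2i]
            exact (hzUU i).2 hi
        have heq : f z2 = f z0 := by
          have hd : f z2 - f z0 = ⟪ct, z2 - z0⟫ := by rw [hctf, map_sub]
          have hzero : ⟪ct, z2 - z0⟫ = 0 := by
            rw [inner_eval]
            refine Finset.sum_eq_zero (fun i _ => ?_)
            by_cases hi : s i = 0
            · have hz : (z2 - z0 : Euc m) i = 0 := by
                show z2 i - z0 i = 0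
                simp [hz2, hi]
              rw [hz, mul_zero]
            · rw [← hci i hi, hcz i hi, zero_mul]
          linarith only [hd, hzero]
        have h1 := hfU z2 hz2U
        have h2 := hfA z0 hz0A
        linarith only [h1, h2, heq]

lemma dotm_list_sum (L : List (Fin m → ℝ)) (a : Fin m → ℝ) :
    dotm L.sum a = (L.map (fun d => dotm d a)).sum := by
  induction L with
  | nil => simp [dotm]
  | cons d L ih =>
    rw [List.sum_cons, List.map_cons, List.sum_cons, ← ih]
    show dotm (fun i => d i + L.sum i) a = _
    rw [dotm, dotm, dotm, ← Finset.sum_add_distrib]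
    congr 1; funext i; ring

lemma list_all_zero (l : List ℝ) (h : ∀ x ∈ l, 0 ≤ x) (hs : l.sum ≤ 0) : ∀ x ∈ l, x = 0 := by
  induction l with
  | nil => simp
  | cons a l ih =>
    rw [List.sum_cons] at hs
    have hl : 0 ≤ l.sum := List.sum_nonneg (fun x hx => h x (List.mem_cons_of_mem _ hx))
    have ha : 0 ≤ a := h a List.mem_cons_self
    intro x hx
    rcases List.mem_cons.mp hx with rfl | hx'
    · linarith
    · exact ih (fun y hy => h y (List.mem_cons_of_mem _ hy)) (by linarith) x hx'

lemma cert_blocks (u : Fin m → Euc n) (a : Fin m → ℝ) (s : Fin m → SignType)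
    (c : Fin m → ℝ) (hK : inK u c) (h1 : ∀ i, s i = 1 → c i ≤ 0)
    (h2 : ∀ i, s i = -1 → 0 ≤ c i)
    (h3 : dotm c a ≤ 0) (h4 : dotm c a < 0 ∨ ∃ i, s i ≠ 0 ∧ c i ≠ 0) :
    ¬ ∃ x : Euc n, ∀ i, s i = SignType.sign (⟪u i, x⟫ - a i) := by
  rintro ⟨x, hx⟩
  have hzero : ∑ i, c i * ⟪u i, x⟫ = 0 := by
    have h5 : ∑ i, c i * ⟪u i, x⟫ = ⟪∑ i, c i • u i, x⟫ := by
      rw [sum_inner]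
      exact Finset.sum_congr rfl (fun i _ => by rw [real_inner_smul_left])
    rw [h5, hK, inner_zero_left]
  have hsum : ∑ i, c i * (⟪u i, x⟫ - a i) = - dotm c a := by
    rw [dotm]
    have : ∀ i : Fin m, c i * (⟪u i, x⟫ - a i) = c i * ⟪u i, x⟫ - c i * a i :=
      fun i => by ring
    simp_rw [this]
    rw [Finset.sum_sub_distrib, hzero, zero_sub]
  have hterm : ∀ i, c i * (⟪u i, x⟫ - a i) ≤ 0 := by
    intro i
    cases hsi : s i with
    | zero =>
      have := (hx i).symm
      rw [hsi] at this
      have : ⟪u i, x⟫ - a i = 0 := sign_eq_zero_iff.mp this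
      rw [this, mul_zero]
    | pos =>
      have := (hx i).symm
      rw [hsi] at this
      have hd : 0 < ⟪u i, x⟫ - a i := sign_eq_one_iff.mp this
      have hc := h1 i hsi
      nlinarith
    | neg =>
      have := (hx i).symm
      rw [hsi] at this
      have hd : ⟪u i, x⟫ - a i < 0 := sign_eq_neg_one_iff.mp this
      have hc := h2 i hsi
      nlinarith
  rcases h4 with hlt | ⟨i0, hsi0, hci0⟩
  · have := Finset.sum_nonpos (fun i (_ : i ∈ Finset.univ) => hterm i)
    rw [hsum] at this
    linarith
  · have hstrict : c i0 * (⟪u i0, x⟫ - a i0) < 0 := by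
      cases hsi : s i0 with
      | zero => exact absurd hsi hsi0
      | pos =>
        have := (hx i0).symm
        rw [hsi] at this
        have hd : 0 < ⟪u i0, x⟫ - a i0 := sign_eq_one_iff.mp this
        have hc : c i0 < 0 := lt_of_le_of_ne (h1 i0 hsi) hci0
        nlinarith
      | neg =>
        have := (hx i0).symm
        rw [hsi] at this
        have hd : ⟪u i0, x⟫ - a i0 < 0 := sign_eq_neg_one_iff.mp this
        have hc : 0 < c i0 := lt_of_le_of_ne (h2 i0 hsi) (Ne.symm hci0)
        nlinarith
    have hlt2 : ∑ i, c i * (⟪u i, x⟫ - a i) < ∑ _i : Fin m, (0:ℝ) := by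
      refine Finset.sum_lt_sum (fun i _ => hterm i) ⟨i0, Finset.mem_univ i0, hstrict⟩
    rw [Finset.sum_const, smul_zero, hsum] at hlt2
    linarith

lemma subconf_sign1 {d c : Fin m → ℝ} (hsub : subconf d c) {i : Fin m}
    (hc : c i ≤ 0) : d i ≤ 0 := by
  obtain ⟨hz, hp⟩ := hsub i
  rcases lt_or_eq_of_le hc with h | h
  · nlinarith
  · rw [hz h]

lemma subconf_sign2 {d c : Fin m → ℝ} (hsub : subconf d c) {i : Fin m}
    (hc : 0 ≤ c i) : 0 ≤ d i := by
  obtain ⟨hz, hp⟩ := hsub i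
  rcases lt_or_eq_of_le hc with h | h
  · nlinarith
  · rw [hz h.symm]

lemma cert_transfer (u : Fin m → Euc n) (a b : Fin m → ℝ) (hab : SameOpenFace u a b)
    (s : Fin m → SignType) (c : Fin m → ℝ) (hK : inK u c)
    (h1 : ∀ i, s i = 1 → c i ≤ 0) (h2 : ∀ i, s i = -1 → 0 ≤ c i)
    (h3 : dotm c b ≤ 0) (h4 : dotm c b < 0 ∨ ∃ i, s i ≠ 0 ∧ c i ≠ 0) :
    ∃ c' : Fin m → ℝ, inK u c' ∧ (∀ i, s i = 1 → c' i ≤ 0) ∧ (∀ i, s i = -1 → 0 ≤ c' i) ∧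
      dotm c' a ≤ 0 ∧ (dotm c' a < 0 ∨ ∃ i, s i ≠ 0 ∧ c' i ≠ 0) := by
  obtain ⟨L, hL, hLsum⟩ := decomp u (Fsupp c).card c le_rfl hK
  by_cases hneg : ∃ d ∈ L, dotm d b < 0
  · obtain ⟨d, hdL, hdb⟩ := hneg
    obtain ⟨hdcirc, hdsub⟩ := hL d hdL
    have hsign := hab d hdcirc
    have hda : dotm d a < 0 := by
      rw [← sign_eq_neg_one_iff, hsign, sign_eq_neg_one_iff]
      exact hdb
    refine ⟨d, hdcirc.1, ?_, ?_, le_of_lt hda, Or.inl hda⟩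
    · intro i hi; exact subconf_sign1 hdsub (h1 i hi)
    · intro i hi; exact subconf_sign2 hdsub (h2 i hi)
  · push_neg at hneg
    have hall : ∀ d ∈ L, dotm d b = 0 := by
      have hmap : ∀ x ∈ L.map (fun d => dotm d b), 0 ≤ x := by
        intro x hx
        obtain ⟨d, hd, rfl⟩ := List.mem_map.mp hx
        exact hneg d hd
      have hsum : (L.map (fun d => dotm d b)).sum ≤ 0 := by
        rw [← dotm_list_sum, hLsum]; exact h3
      intro d hd
      exact list_all_zero _ hmap hsum _ (List.mem_map.mpr ⟨d, hd, rfl⟩)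
    have hda : dotm c a = 0 := by
      rw [← hLsum, dotm_list_sum]
      refine List.sum_eq_zero ?_
      intro x hx
      obtain ⟨d, hd, rfl⟩ := List.mem_map.mp hx
      obtain ⟨hdcirc, _⟩ := hL d hd
      have hsign := hab d hdcirc
      rw [← sign_eq_zero_iff, hsign, sign_eq_zero_iff]
      exact hall d hd
    have hdb0 : dotm c b = 0 := by
      rw [← hLsum, dotm_list_sum]
      exact List.sum_eq_zero (fun x hx => by
        obtain ⟨d, hd, rfl⟩ := List.mem_map.mp hx
        exact hall d hd)
    rcases h4 with hlt | hex
    · rw [hdb0] at hlt; exact absurd hlt (lt_irrefl 0)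
    · exact ⟨c, hK, h1, h2, le_of_eq hda, Or.inr hex⟩

lemma signSet_mono (u : Fin m → Euc n) (a b : Fin m → ℝ) (hab : SameOpenFace u a b) :
    signSet u a ⊆ signSet u b := by
  intro s hs
  by_contra hns
  have hns' : ¬ ∃ y : Euc n, ∀ i, s i = SignType.sign (⟪u i, y⟫ - b i) := hns
  obtain ⟨c, hK, h1, h2, h3, h4⟩ := exists_cert u b s hns'
  obtain ⟨c', hK', h1', h2', h3', h4'⟩ := cert_transfer u a b hab s c hK h1 h2 h3 h4
  exact cert_blocks u a s c' hK' h1' h2' h3' h4' hs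

lemma normalCone_eq (hm : 1 ≤ m) (u : Fin m → Euc n) (a : Fin m → ℝ) (I J K : Set (Fin m))
    (s : Fin m → SignType) (x : Euc n) (hx : x ∈ poly u a I J K)
    (hs : ∀ i, s i = SignType.sign (⟪u i, x⟫ - a i)) :
    normalCone (poly u a I J K) x =
      {v | ∀ d : Euc n, (∀ i ∈ I, ⟪u i, d⟫ = 0) → (∀ j ∈ J, s j = 0 → ⟪u j, d⟫ ≤ 0) →
        (∀ k ∈ K, s k = 0 → 0 ≤ ⟪u k, d⟫) → ⟪v, d⟫ ≤ 0} := by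
  haveI : Nonempty (Fin m) := ⟨⟨0, hm⟩⟩
  have htight : ∀ i, s i = 0 → ⟪u i, x⟫ = a i := by
    intro i hi
    have := (hs i).symm
    rw [hi] at this
    have := sign_eq_zero_iff.mp this
    linarith
  have hnotight : ∀ i, s i ≠ 0 → ⟪u i, x⟫ - a i ≠ 0 := by
    intro i hi hc
    exact hi (by rw [hs i, hc, sign_zero])
  ext v
  constructor
  · -- normal cone ⊆ dual of feasible directions
    intro hv d hd1 hd2 hd3
    set δ : Fin m → ℝ := fun i =>
      if s i = 0 then 1 else |⟪u i, x⟫ - a i| / (|⟪u i, d⟫| + 1) with hδ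
    have hδpos : ∀ i, 0 < δ i := by
      intro i
      by_cases hi : s i = 0
      · simp [hδ, hi]
      · have := hnotight i hi
        have h1 : 0 < |⟪u i, x⟫ - a i| := abs_pos.mpr this
        simp only [hδ, if_neg hi]
        positivity
    set ε : ℝ := Finset.univ.inf' Finset.univ_nonempty δ with hε
    have hεpos : 0 < ε := by
      rw [hε, Finset.lt_inf'_iff]
      exact fun i _ => hδpos i
    have hεle : ∀ i, ε ≤ δ i := fun i => Finset.inf'_le δ (Finset.mem_univ i)
    have hkey : ∀ i : Fin m, s i ≠ 0 → ε * |⟪u i, d⟫| ≤ |⟪u i, x⟫ - a i| - ε := by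
      intro i hi
      have h1 : ε ≤ |⟪u i, x⟫ - a i| / (|⟪u i, d⟫| + 1) := by
        have h0 := hεle i
        simp only [hδ, if_neg hi] at h0
        exact h0
      have h2 : ε * (|⟪u i, d⟫| + 1) ≤ |⟪u i, x⟫ - a i| :=
        (le_div_iff₀ (by positivity)).mp h1
      nlinarith [abs_nonneg (⟪u i, d⟫)]
    have hmem : x + ε • d ∈ poly u a I J K := by
      refine ⟨?_, ?_, ?_⟩
      · intro i hi
        rw [inner_add_right, real_inner_smul_right, hd1 i hi, mul_zero, add_zero]
        exact hx.1 i hi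
      · intro j hj
        rw [inner_add_right, real_inner_smul_right]
        by_cases hsj : s j = 0
        · have ht := htight j hsj
          have hle := hd2 j hj hsj
          nlinarith
        · have hneg : ⟪u j, x⟫ - a j < 0 :=
            lt_of_le_of_ne (by linarith [hx.2.1 j hj]) (hnotight j hsj)
          have habs : |⟪u j, x⟫ - a j| = -(⟪u j, x⟫ - a j) := abs_of_neg hneg
          have hk := hkey j hsj
          rw [habs] at hk
          have hq : ⟪u j, d⟫ ≤ |⟪u j, d⟫| := le_abs_self _
          nlinarith [mul_le_mul_of_nonneg_left hq (le_of_lt hεpos)]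
      · intro k hk
        rw [inner_add_right, real_inner_smul_right]
        by_cases hsk : s k = 0
        · have ht := htight k hsk
          have hle := hd3 k hk hsk
          nlinarith
        · have hpos : 0 < ⟪u k, x⟫ - a k :=
            lt_of_le_of_ne (by linarith [hx.2.2 k hk]) (Ne.symm (hnotight k hsk))
          have habs : |⟪u k, x⟫ - a k| = ⟪u k, x⟫ - a k := abs_of_pos hpos
          have hkk := hkey k hsk
          rw [habs] at hkk
          have hq : -(⟪u k, d⟫) ≤ |⟪u k, d⟫| := neg_le_abs _
          nlinarith [mul_le_mul_of_nonneg_left hq (le_of_lt hεpos)]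
    have := hv _ hmem
    rw [inner_add_right, real_inner_smul_right] at this
    nlinarith
  · -- dual ⊆ normal cone
    intro hv y hy
    have := hv (y - x) ?_ ?_ ?_
    · rw [inner_sub_right] at this
      linarith
    · intro i hi
      rw [inner_sub_right, hx.1 i hi, hy.1 i hi, sub_self]
    · intro j hj hsj
      rw [inner_sub_right, htight j hsj]
      linarith [hy.2.1 j hj]
    · intro k hk hsk
      rw [inner_sub_right, htight k hsk]
      linarith [hy.2.2 k hk]

theorem normal_fan_eq_of_sameOpenFace {n m : ℕ} (hn : 1 ≤ n) (hm : 1 ≤ m)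
    (u : Fin m → Euc n) (hu : ∀ i, u i ≠ 0)
    (a b : Fin m → ℝ) (hab : SameOpenFace u a b)
    (I J K : Set (Fin m)) (hIJK : IsTripartition I J K) :
    normalFan (poly u a I J K) = normalFan (poly u b I J K) := by
  have key : ∀ (a b : Fin m → ℝ), SameOpenFace u a b →
      normalFan (poly u a I J K) ⊆ normalFan (poly u b I J K) := by
    intro a b hab N hN
    obtain ⟨x, hx, rfl⟩ := hN
    set s : Fin m → SignType := fun i => SignType.sign (⟪u i, x⟫ - a i) with hsdef
    have hsa : s ∈ signSet u a := ⟨x, fun i => rfl⟩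
    obtain ⟨y, hy⟩ := signSet_mono u a b hab hsa
    have hyP : y ∈ poly u b I J K := by
      refine ⟨?_, ?_, ?_⟩
      · intro i hi
        have hsi : s i = 0 := by
          rw [hsdef]
          show SignType.sign (⟪u i, x⟫ - a i) = 0
          rw [sign_eq_zero_iff]
          linarith [hx.1 i hi]
        have h2 := (hy i).symm
        rw [hsi] at h2
        have := sign_eq_zero_iff.mp h2
        linarith
      · intro j hj
        by_contra hgt
        push_neg at hgt
        have h1 : s j = 1 := by rw [hy j]; exact sign_eq_one_iff.mpr (by linarith)
        have h2 : SignType.sign (⟪u j, x⟫ - a j) = 1 := h1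
        have := sign_eq_one_iff.mp h2
        linarith [hx.2.1 j hj]
      · intro k hk
        by_contra hgt
        push_neg at hgt
        have h1 : s k = -1 := by rw [hy k]; exact sign_eq_neg_one_iff.mpr (by linarith)
        have h2 : SignType.sign (⟪u k, x⟫ - a k) = -1 := h1
        have := sign_eq_neg_one_iff.mp h2
        linarith [hx.2.2 k hk]
    refine ⟨y, hyP, ?_⟩
    rw [normalCone_eq hm u a I J K s x hx (fun i => rfl),
        normalCone_eq hm u b I J K s y hyP hy]
  have hsymm : SameOpenFace u b a := fun c hc => (hab c hc).symm
  exact Set.Subset.antisymm (key a b hab) (key b a hsymm)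

end Aux
end
end

section
/- Suppose P(a,I,J,K) is nonempty and b ∈ F_a, the smallest face of the derived arrangement δA_o containing a. Then P(b,I,J,K) is nonempty. -/
open RealInnerProductSpace

noncomputable section

/-- `b` belongs to `F_a`, the smallest face of the derived arrangement containing `a`. -/
def MemMinFace {n m : ℕ} (u : Fin m → Euc n) (a b : Fin m → ℝ) : Prop :=
  ∀ c : Fin m → ℝ, IsCircuitVector u c →
    (dotm c a = 0 → dotm c b = 0) ∧ (0 < dotm c a → 0 ≤ dotm c b) ∧
    (dotm c a < 0 → dotm c b ≤ 0)



open Finset Topology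

section Cone
variable {E : Type*} [NormedAddCommGroup E] [NormedSpace ℝ E] [FiniteDimensional ℝ E]
variable {ι : Type*} [Fintype ι]

/-- The finitely generated cone on generators `v`. -/
def fgCone (v : ι → E) : Set E :=
  {x | ∃ lam : ι → ℝ, (∀ i, 0 ≤ lam i) ∧ x = ∑ i, lam i • v i}

/-- Points of the cone representable with support in `s`. -/
def coneSupp (v : ι → E) (s : Finset ι) : Set E :=
  {x | ∃ lam : ι → ℝ, (∀ i, 0 ≤ lam i) ∧ (∀ i ∉ s, lam i = 0) ∧ x = ∑ i, lam i • v i}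

lemma coneSupp_subset (v : ι → E) (s : Finset ι) : coneSupp v s ⊆ fgCone v := by
  rintro x ⟨lam, h1, _, h3⟩; exact ⟨lam, h1, h3⟩


lemma cone_shrink (v : ι → E) (lam c : ι → ℝ) (hlam : ∀ i, 0 ≤ lam i)
    (hsupp : ∀ i, c i ≠ 0 → lam i ≠ 0) (hcsum : ∑ i, c i • v i = 0)
    (i₀ : ι) (hpos : 0 < c i₀) :
    ∃ lam' : ι → ℝ, (∀ i, 0 ≤ lam' i) ∧
      (Finset.univ.filter fun i => lam' i ≠ 0) ⊂ (Finset.univ.filter fun i => lam i ≠ 0) ∧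
      ∑ i, lam' i • v i = ∑ i, lam i • v i := by
  classical
  obtain ⟨i₁, hi₁F, hmin⟩ := Finset.exists_min_image
    (univ.filter fun i => 0 < c i) (fun i => lam i / c i) ⟨i₀, by simp [hpos]⟩
  have hci₁ : 0 < c i₁ := by simpa using hi₁F
  set t : ℝ := lam i₁ / c i₁ with ht
  have ht0 : 0 ≤ t := div_nonneg (hlam i₁) hci₁.le
  refine ⟨fun i => lam i - t * c i, ?_, ?_, ?_⟩
  · intro i
    show 0 ≤ lam i - t * c i
    rcases lt_or_ge 0 (c i) with h | h
    · have := hmin i (by simp [h])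
      have : t * c i ≤ lam i := (le_div_iff₀ h).mp this
      linarith
    · nlinarith [hlam i]
  · constructor
    · intro i hi
      simp only [Finset.mem_filter, Finset.mem_univ, true_and] at hi ⊢
      intro h0
      have hci : c i = 0 := by
        by_contra hh; exact hsupp i hh h0
      simp [h0, hci] at hi
    · intro hsub
      have h1 : lam i₁ ≠ 0 := hsupp i₁ hci₁.ne'
      have h2 : (fun i => lam i - t * c i) i₁ = 0 := by
        show lam i₁ - t * c i₁ = 0
        rw [ht, div_mul_cancel₀ _ hci₁.ne', sub_self]
      have := hsub (by simp [h1] : i₁ ∈ Finset.univ.filter fun i => lam i ≠ 0)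
      simp [h2] at this
  · calc ∑ i, (lam i - t * c i) • v i
        = ∑ i, (lam i • v i - t • (c i • v i)) := by
          refine Finset.sum_congr rfl fun i _ => ?_
          rw [sub_smul, smul_smul]
      _ = ∑ i, lam i • v i - t • ∑ i, c i • v i := by
          rw [Finset.sum_sub_distrib, Finset.smul_sum]
      _ = ∑ i, lam i • v i := by rw [hcsum, smul_zero, sub_zero]

lemma caratheodory_aux (v : ι → E) :
    ∀ N : ℕ, ∀ lam : ι → ℝ, (∀ i, 0 ≤ lam i) →
      (univ.filter fun i => lam i ≠ 0).card ≤ N →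
      ∃ s : Finset ι, LinearIndependent ℝ (fun i : s => v i) ∧
        (∑ i, lam i • v i) ∈ coneSupp v s := by
  classical
  intro N
  induction N with
  | zero =>
    intro lam hlam hcard
    refine ⟨∅, ?_, lam, hlam, fun i _ => ?_, rfl⟩
    · have : IsEmpty ((∅ : Finset ι) : Type _) := by
        simp [Finset.isEmpty_coe_sort]
        exact ⟨fun x => x.2⟩
      exact linearIndependent_empty_type
    · by_contra h
      have : i ∈ univ.filter fun i => lam i ≠ 0 := by simp [h]
      have := Finset.card_pos.mpr ⟨i, this⟩
      omega
  | succ N ih =>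
    intro lam hlam hcard
    set s₀ := univ.filter fun i => lam i ≠ 0 with hs₀
    by_cases hLI : LinearIndependent ℝ (fun i : s₀ => v i)
    · exact ⟨s₀, hLI, lam, hlam, fun i hi => by simpa [hs₀] using hi, rfl⟩
    · obtain ⟨g, hgsum, i₀, hgi₀⟩ := Fintype.not_linearIndependent_iff.mp hLI
      -- extend g to c on ι
      set c : ι → ℝ := fun i => if h : i ∈ s₀ then g ⟨i, h⟩ else 0 with hc
      have hcsupp : ∀ i, i ∉ s₀ → c i = 0 := fun i hi => by simp [hc, hi]
      have hcsum : ∑ i, c i • v i = 0 := by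
        calc ∑ i, c i • v i = ∑ i ∈ s₀, c i • v i :=
              (Finset.sum_subset (subset_univ _) (fun i _ hi => by
                simp [hcsupp i hi])).symm
          _ = ∑ i ∈ s₀.attach, c i.1 • v i.1 := (Finset.sum_attach _ _).symm
          _ = ∑ i : s₀, g i • v i := by
              refine Finset.sum_congr rfl fun i _ => ?_
              simp [hc, dif_pos i.2]
          _ = 0 := hgsum
      have hc0 : c i₀.1 ≠ 0 := by simpa [hc, dif_pos i₀.2] using hgi₀
      have hsupp : ∀ i, c i ≠ 0 → lam i ≠ 0 := by
        intro i hci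
        have his : i ∈ s₀ := by
          by_contra h; exact hci (hcsupp i h)
        simpa [hs₀] using his
      have key : ∃ lam' : ι → ℝ, (∀ i, 0 ≤ lam' i) ∧
          (Finset.univ.filter fun i => lam' i ≠ 0) ⊂ s₀ ∧
          ∑ i, lam' i • v i = ∑ i, lam i • v i := by
        rcases hc0.lt_or_gt with hneg | hpos
        · have hnegsum : ∑ i, (-c) i • v i = 0 := by
            simpa [neg_smul] using congrArg Neg.neg hcsum
          obtain ⟨lam', h1, h2, h3⟩ := cone_shrink v lam (-c) hlam
            (fun i hci => hsupp i (by simpa using hci)) hnegsum i₀.1 (by simpa using hneg)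
          exact ⟨lam', h1, by simpa [hs₀] using h2, h3⟩
        · obtain ⟨lam', h1, h2, h3⟩ := cone_shrink v lam c hlam hsupp hcsum i₀.1 hpos
          exact ⟨lam', h1, by simpa [hs₀] using h2, h3⟩
      obtain ⟨lam', h1, h2, h3⟩ := key
      have hcard' : (univ.filter fun i => lam' i ≠ 0).card ≤ N := by
        have := Finset.card_lt_card h2
        omega
      obtain ⟨s, hs1, hs2⟩ := ih lam' h1 hcard'
      rw [← h3]
      exact ⟨s, hs1, hs2⟩

lemma isClosed_coneSupp (v : ι → E) (s : Finset ι)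
    (hs : LinearIndependent ℝ (fun i : s => v i)) : IsClosed (coneSupp v s) := by
  classical
  -- the cone is the image of the nonneg orthant under an injective linear map
  set L : ({i // i ∈ s} → ℝ) →ₗ[ℝ] E :=
    { toFun := fun mu => ∑ i : s, mu i • v i.1
      map_add' := by
        intro x y; simp [add_smul, Finset.sum_add_distrib]
      map_smul' := by
        intro r x; simp [smul_smul, Finset.smul_sum] } with hL
  have hLinj : LinearMap.ker L = ⊥ := by
    rw [LinearMap.ker_eq_bot']
    intro mu hmu
    have := Fintype.linearIndependent_iff.mp hs mu hmu
    funext i; exact this i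
  have hemb : IsClosedEmbedding L := LinearMap.isClosedEmbedding_of_injective hLinj
  have himg : coneSupp v s = L '' {mu | ∀ i, 0 ≤ mu i} := by
    ext x
    constructor
    · rintro ⟨lam, h1, h2, rfl⟩
      refine ⟨fun i => lam i.1, fun i => h1 i.1, ?_⟩
      show ∑ i : s, lam i.1 • v i.1 = ∑ i, lam i • v i
      rw [Finset.univ_eq_attach, Finset.sum_attach s (fun i => lam i • v i)]
      exact Finset.sum_subset (Finset.subset_univ s) fun i _ hi => by
        rw [h2 i hi, zero_smul]
    · rintro ⟨mu, hmu, rfl⟩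
      refine ⟨fun i => if h : i ∈ s then mu ⟨i, h⟩ else 0, fun i => ?_, fun i hi => dif_neg hi, ?_⟩
      · by_cases h : i ∈ s
        · simpa [dif_pos h] using hmu ⟨i, h⟩
        · simp [dif_neg h]
      · show ∑ i : s, mu i • v i.1 = _
        rw [← Finset.sum_subset (Finset.subset_univ s) (f := fun i =>
          (if h : i ∈ s then mu ⟨i, h⟩ else 0) • v i) (fun i _ hi => by simp [dif_neg hi])]
        rw [← Finset.sum_attach s (fun i => (if h : i ∈ s then mu ⟨i, h⟩ else 0) • v i)]
        rw [Finset.univ_eq_attach]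
        refine Finset.sum_congr rfl fun i _ => ?_
        rw [dif_pos i.2]
  rw [himg]
  refine (hemb.isClosedMap _ ?_)
  have : {mu : {i // i ∈ s} → ℝ | ∀ i, 0 ≤ mu i} = ⋂ i, {mu | 0 ≤ mu i} := by
    ext mu; simp [Set.mem_iInter]
  rw [this]
  exact isClosed_iInter fun i => isClosed_Ici.preimage (continuous_apply i)

lemma isClosed_fgCone (v : ι → E) : IsClosed (fgCone v) := by
  classical
  have hcover : fgCone v = ⋃ s : {s : Finset ι // LinearIndependent ℝ (fun i : s => v i)},
      coneSupp v s.1 := by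
    ext x
    constructor
    · rintro ⟨lam, h1, rfl⟩
      obtain ⟨s, hs1, hs2⟩ := caratheodory_aux v ((univ.filter fun i => lam i ≠ 0).card)
        lam h1 le_rfl
      exact Set.mem_iUnion.mpr ⟨⟨s, hs1⟩, hs2⟩
    · intro hx
      obtain ⟨s, hs⟩ := Set.mem_iUnion.mp hx
      exact coneSupp_subset v s.1 hs
  rw [hcover]
  exact isClosed_iUnion_of_finite fun s => isClosed_coneSupp v s.1 s.2

lemma convex_fgCone (v : ι → E) : Convex ℝ (fgCone v) := by
  rintro x ⟨lx, hlx, rfl⟩ y ⟨ly, hly, rfl⟩ p q hp hq hpq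
  refine ⟨fun i => p * lx i + q * ly i,
    fun i => add_nonneg (mul_nonneg hp (hlx i)) (mul_nonneg hq (hly i)), ?_⟩
  rw [Finset.smul_sum, Finset.smul_sum, ← Finset.sum_add_distrib]
  refine Finset.sum_congr rfl fun i _ => ?_
  rw [add_smul, smul_smul, smul_smul]

lemma zero_mem_fgCone (v : ι → E) : (0 : E) ∈ fgCone v :=
  ⟨0, fun i => le_rfl, by simp⟩

lemma smul_mem_fgCone (v : ι → E) {t : ℝ} (ht : 0 ≤ t) {x : E} (hx : x ∈ fgCone v) :
    t • x ∈ fgCone v := by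
  obtain ⟨lam, h1, rfl⟩ := hx
  exact ⟨fun i => t * lam i, fun i => mul_nonneg ht (h1 i),
    by rw [Finset.smul_sum]; exact Finset.sum_congr rfl fun i _ => (smul_smul t (lam i) (v i))⟩

end Cone

-- conformality
def Conf {m : ℕ} (w c : Fin m → ℝ) : Prop :=
  ∀ i, 0 ≤ w i * c i ∧ (c i = 0 → w i = 0)

lemma conf_refl {m : ℕ} (c : Fin m → ℝ) : Conf c c :=
  fun i => ⟨mul_self_nonneg _, fun h => h⟩

lemma conf_trans {m : ℕ} {w z c : Fin m → ℝ} (h1 : Conf w z) (h2 : Conf z c) : Conf w c := by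
  intro i
  constructor
  · by_cases hw : w i = 0
    · simp [hw]
    · have hz : z i ≠ 0 := fun h => hw ((h1 i).2 h)
      have hc : c i ≠ 0 := fun h => hz ((h2 i).2 h)
      have hwz : 0 < w i * z i := lt_of_le_of_ne (h1 i).1 (by simp [mul_ne_zero hw hz]; tauto)
      have hzc : 0 < z i * c i := lt_of_le_of_ne (h2 i).1 (by simp [mul_ne_zero hz hc]; tauto)
      nlinarith [mul_pos hwz hzc, mul_self_nonneg (z i)]
  · intro hc
    exact (h1 i).2 ((h2 i).2 hc)

lemma not_li_of_ker {n m : ℕ} (u : Fin m → Euc n) (z : Fin m → ℝ) (hz : z ≠ 0)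
    (hker : ∑ i, z i • u i = 0) :
    ¬ LinearIndependent ℝ (fun i : {i : Fin m | z i ≠ 0} => u i) := by
  classical
  intro hLI
  have hsum : ∑ i : {i : Fin m | z i ≠ 0}, z i.1 • u i.1 = 0 := by
    rw [← Finset.sum_subtype (univ.filter fun i => z i ≠ 0)
      (fun i => by simp) (fun i => z i • u i)]
    refine (Finset.sum_subset (Finset.filter_subset _ _) (fun i _ hi => ?_)).trans hker
    simp only [Finset.mem_filter, Finset.mem_univ, true_and, not_not] at hi
    rw [hi, zero_smul]
  have := Fintype.linearIndependent_iff.mp hLI (fun i => z i.1) hsum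
  apply hz; funext i
  by_cases h : z i = 0
  · exact h
  · exact this ⟨i, h⟩

/-- Every nonzero kernel vector has a conformal circuit vector "inside" it. -/
lemma extract_circuit {n m : ℕ} (u : Fin m → Euc n) :
    ∀ N : ℕ, ∀ z : Fin m → ℝ, z ≠ 0 → (∑ i, z i • u i) = 0 →
      (univ.filter fun i => z i ≠ 0).card ≤ N →
      ∃ w : Fin m → ℝ, IsCircuitVector u w ∧ Conf w z := by
  classical
  intro N
  induction N with
  | zero =>
    intro z hz _ hcard
    exfalso
    obtain ⟨i, hi⟩ : ∃ i, z i ≠ 0 := by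
      by_contra h; push_neg at h; exact hz (funext h)
    have : i ∈ univ.filter fun i => z i ≠ 0 := by simp [hi]
    have := Finset.card_pos.mpr ⟨i, this⟩
    omega
  | succ N ih =>
    intro z hz hker hcard
    by_cases hC : IsCircuit u {i | z i ≠ 0}
    · exact ⟨z, ⟨hker, hC⟩, conf_refl z⟩
    · -- some proper subset is dependent
      have hnotall : ∃ D : Set (Fin m), D ⊂ {i | z i ≠ 0} ∧
          ¬ LinearIndependent ℝ (fun i : D => u i) := by
        by_contra h; push_neg at h
        exact hC ⟨not_li_of_ker u z hz hker, fun D hD => h D hD⟩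
      obtain ⟨D, hDsub, hDdep⟩ := hnotall
      obtain ⟨g, hgsum, i₂, hgi₂⟩ := Fintype.not_linearIndependent_iff.mp hDdep
      set c : Fin m → ℝ := fun i => if h : i ∈ D then g ⟨i, h⟩ else 0 with hc
      have hcD : ∀ i, c i ≠ 0 → i ∈ D := by
        intro i hi
        by_contra h; exact hi (by simp [hc, h])
      have hcz : ∀ i, z i = 0 → c i = 0 := by
        intro i h
        by_contra hh
        exact (hDsub.1 (hcD i hh)) h
      have hcsum : ∑ i, c i • u i = 0 := by
        calc ∑ i, c i • u i
            = ∑ i ∈ univ.filter (· ∈ D), c i • u i := by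
              rw [Finset.sum_filter_of_ne]
              intro i _ h
              by_contra hiD
              exact h (by simp [hc, hiD])
          _ = ∑ i : D, c i.1 • u i.1 :=
              Finset.sum_subtype (univ.filter (· ∈ D)) (fun i => by simp) (fun i => c i • u i)
          _ = ∑ i : D, g i • u i.1 := by
              refine Finset.sum_congr rfl fun i _ => ?_
              simp [hc, dif_pos i.2]
          _ = 0 := hgsum
      have hc0 : c ≠ 0 := by
        intro h
        apply hgi₂
        have : c i₂.1 = 0 := by rw [h]; rfl
        simpa [hc, dif_pos i₂.2] using this
      obtain ⟨i₃, hi₃⟩ : ∃ i₃, c i₃ ≠ 0 := by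
        by_contra h; push_neg at h; exact hc0 (funext h)
      -- minimize |z i / c i| over the support of c
      obtain ⟨i₁, hi₁F, hmin⟩ := Finset.exists_min_image
        (univ.filter fun i => c i ≠ 0) (fun i => |z i / c i|) ⟨i₃, by simp [hi₃]⟩
      have hci₁ : c i₁ ≠ 0 := by simpa using hi₁F
      have hzi₁ : z i₁ ≠ 0 := fun h => hci₁ (hcz i₁ h)
      set t : ℝ := z i₁ / c i₁ with ht
      set z' : Fin m → ℝ := fun i => z i - t * c i with hz'
      have hz'ker : ∑ i, z' i • u i = 0 := by
        calc ∑ i, z' i • u i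
            = ∑ i, (z i • u i - t • (c i • u i)) := by
              refine Finset.sum_congr rfl fun i _ => ?_
              show (z i - t * c i) • u i = _
              rw [sub_smul, smul_smul]
          _ = ∑ i, z i • u i - t • ∑ i, c i • u i := by
              rw [Finset.sum_sub_distrib, Finset.smul_sum]
          _ = 0 := by rw [hker, hcsum, smul_zero, sub_zero]
      have hz'z : ∀ i, z i = 0 → z' i = 0 := by
        intro i h
        show z i - t * c i = 0
        rw [h, hcz i h, mul_zero, sub_zero]
      have hz'i₁ : z' i₁ = 0 := by
        show z i₁ - t * c i₁ = 0
        rw [ht, div_mul_cancel₀ _ hci₁, sub_self]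
      have hconf : Conf z' z := by
        intro i
        refine ⟨?_, hz'z i⟩
        by_cases hci : c i = 0
        · show 0 ≤ (z i - t * c i) * z i
          rw [hci, mul_zero, sub_zero]; exact mul_self_nonneg _
        · have hzi : z i ≠ 0 := fun h => hci (hcz i h)
          have habs : |t| ≤ |z i / c i| := by
            rw [ht] at *
            exact hmin i (by simp [hci])
          show 0 ≤ (z i - t * c i) * z i
          have hrep : z i = (z i / c i) * c i := by field_simp
          set r : ℝ := z i / c i with hr
          have h1 : r * t ≤ |r| * |t| := by
            calc r * t ≤ |r * t| := le_abs_self _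
              _ = |r| * |t| := abs_mul r t
          have h2 : |r| * |t| ≤ |r| * |r| := by
            apply mul_le_mul_of_nonneg_left habs (abs_nonneg r)
          have h3 : 0 ≤ r * (r - t) := by
            have : |r| * |r| = r * r := abs_mul_abs_self r
            nlinarith
          calc (0:ℝ) ≤ (r * (r - t)) * (c i * c i) := mul_nonneg h3 (mul_self_nonneg _)
            _ = (z i - t * c i) * z i := by rw [hrep]; ring
      -- z' is nonzero: pick an element of (supp z) \ D
      obtain ⟨i₄, hi₄z, hi₄D⟩ : ∃ i₄, z i₄ ≠ 0 ∧ i₄ ∉ D := by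
        obtain ⟨i₄, h1, h2⟩ := Set.exists_of_ssubset hDsub
        exact ⟨i₄, h1, h2⟩
      have hz'i₄ : z' i₄ ≠ 0 := by
        show z i₄ - t * c i₄ ≠ 0
        rw [show c i₄ = 0 by simp [hc, hi₄D], mul_zero, sub_zero]
        exact hi₄z
      have hz'0 : z' ≠ 0 := fun h => hz'i₄ (by rw [h]; rfl)
      have hcard' : (univ.filter fun i => z' i ≠ 0).card ≤ N := by
        have hsub : (univ.filter fun i => z' i ≠ 0) ⊆
            (univ.filter fun i => z i ≠ 0).erase i₁ := by
          intro i hi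
          simp only [Finset.mem_filter, Finset.mem_univ, true_and] at hi
          rw [Finset.mem_erase]
          constructor
          · intro h; rw [h] at hi; exact hi hz'i₁
          · simp only [Finset.mem_filter, Finset.mem_univ, true_and]
            intro h; exact hi (hz'z i h)
        have h1 := Finset.card_le_card hsub
        have h2 : i₁ ∈ univ.filter fun i => z i ≠ 0 := by simp [hzi₁]
        have h3 := Finset.card_erase_of_mem h2
        omega
      obtain ⟨w, hw1, hw2⟩ := ih z' hz'0 hz'ker hcard'
      exact ⟨w, hw1, conf_trans hw2 hconf⟩

/-- A certificate: kernel vector with the right signs on `J` and `K`. -/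
def IsCert {n m : ℕ} (u : Fin m → Euc n) (J K : Set (Fin m)) (c : Fin m → ℝ) : Prop :=
  (∑ i, c i • u i) = 0 ∧ (∀ j ∈ J, 0 ≤ c j) ∧ (∀ k ∈ K, c k ≤ 0)

lemma dotm_inner {n m : ℕ} (u : Fin m → Euc n) (c : Fin m → ℝ) (x : Euc n) :
    ∑ i, c i * ⟪u i, x⟫ = ⟪∑ i, c i • u i, x⟫ := by
  rw [sum_inner]
  exact Finset.sum_congr rfl fun i _ => (real_inner_smul_left _ _ _).symm

lemma cert_dotm_nonneg {n m : ℕ} {u : Fin m → Euc n} {a : Fin m → ℝ}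
    {I J K : Set (Fin m)} (hIJK : IsTripartition I J K) {x : Euc n}
    (hx : x ∈ poly u a I J K) {c : Fin m → ℝ} (hc : IsCert u J K c) :
    0 ≤ dotm c a := by
  have key : ∑ i, c i * ⟪u i, x⟫ ≤ dotm c a := by
    apply Finset.sum_le_sum
    intro i _
    have hi : i ∈ I ∪ J ∪ K := by rw [hIJK.1]; trivial
    rcases hi with (hi | hi) | hi
    · rw [hx.1 i hi]
    · exact mul_le_mul_of_nonneg_left (hx.2.1 i hi) (hc.2.1 i hi)
    · exact mul_le_mul_of_nonpos_left (hx.2.2 i hi) (hc.2.2 i hi)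
  calc (0:ℝ) = ⟪∑ i, c i • u i, x⟫ := by rw [hc.1, inner_zero_left]
    _ = ∑ i, c i * ⟪u i, x⟫ := (dotm_inner u c x).symm
    _ ≤ dotm c a := key

/-- signs transfer along conformality -/
lemma conf_cert_signs {m : ℕ} {J K : Set (Fin m)} {c w : Fin m → ℝ}
    (hcJ : ∀ j ∈ J, 0 ≤ c j) (hcK : ∀ k ∈ K, c k ≤ 0) (hw : Conf w c) :
    (∀ j ∈ J, 0 ≤ w j) ∧ (∀ k ∈ K, w k ≤ 0) := by
  constructor
  · intro j hj
    by_cases h : c j = 0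
    · rw [(hw j).2 h]
    · have h1 : 0 < c j := lt_of_le_of_ne (hcJ j hj) (Ne.symm h)
      nlinarith [(hw j).1]
  · intro k hk
    by_cases h : c k = 0
    · rw [(hw k).2 h]
    · have h1 : c k < 0 := lt_of_le_of_ne (hcK k hk) h
      nlinarith [(hw k).1]

lemma circuitVector_exists_ne {n m : ℕ} {u : Fin m → Euc n} {w : Fin m → ℝ}
    (hw : IsCircuitVector u w) : ∃ i, w i ≠ 0 := by
  by_contra h
  push_neg at h
  have hempty : {i : Fin m | w i ≠ 0} = ∅ := by ext i; simp [h i]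
  have : IsEmpty ↥{i : Fin m | w i ≠ 0} := Set.isEmpty_coe_sort.2 hempty
  exact hw.2.1 linearIndependent_empty_type

/-- The key inequality: every certificate pairs nonnegatively with `b`. -/
lemma cert_dotm_b_nonneg {n m : ℕ} {u : Fin m → Euc n} {a b : Fin m → ℝ}
    (hb : MemMinFace u a b) {I J K : Set (Fin m)} (hIJK : IsTripartition I J K)
    {x₀ : Euc n} (hx₀ : x₀ ∈ poly u a I J K) :
    ∀ N : ℕ, ∀ c : Fin m → ℝ, IsCert u J K c →
      (Finset.univ.filter fun i => c i ≠ 0).card ≤ N → 0 ≤ dotm c b := by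
  classical
  intro N
  induction N with
  | zero =>
    intro c _ hcard
    have : ∀ i, c i = 0 := by
      intro i
      by_contra h
      have : i ∈ Finset.univ.filter fun i => c i ≠ 0 := by simp [h]
      have := Finset.card_pos.mpr ⟨i, this⟩
      omega
    simp [dotm, this]
  | succ N ih =>
    intro c hc hcard
    by_cases hc0 : ∀ i, c i = 0
    · simp [dotm, hc0]
    · push_neg at hc0
      have hcne : c ≠ 0 := by
        obtain ⟨i, hi⟩ := hc0
        exact fun h => hi (by rw [h]; rfl)
      -- extract a conformal circuit vector
      obtain ⟨w, hwcirc, hwconf⟩ := extract_circuit u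
        ((Finset.univ.filter fun i => c i ≠ 0).card) c hcne hc.1 le_rfl
      obtain ⟨hwJ, hwK⟩ := conf_cert_signs hc.2.1 hc.2.2 hwconf
      have hwcert : IsCert u J K w := ⟨hwcirc.1, hwJ, hwK⟩
      -- w pairs nonnegatively with b
      have hwb : 0 ≤ dotm w b := by
        have hwa : 0 ≤ dotm w a := cert_dotm_nonneg hIJK hx₀ hwcert
        rcases hwa.eq_or_lt with h | h
        · exact le_of_eq ((hb w hwcirc).1 h.symm).symm
        · exact (hb w hwcirc).2.1 h
      -- choose the largest multiple of w that stays conformal inside c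
      obtain ⟨i₂, hi₂⟩ := circuitVector_exists_ne hwcirc
      obtain ⟨i₁, hi₁F, hmin⟩ := Finset.exists_min_image
        (Finset.univ.filter fun i => w i ≠ 0) (fun i => c i / w i) ⟨i₂, by simp [hi₂]⟩
      have hwi₁ : w i₁ ≠ 0 := by simpa using hi₁F
      have hci₁ : c i₁ ≠ 0 := fun h => hwi₁ ((hwconf i₁).2 h)
      set t : ℝ := c i₁ / w i₁ with ht
      have hratpos : ∀ i, w i ≠ 0 → 0 < c i / w i := by
        intro i hwi
        have hci : c i ≠ 0 := fun h => hwi ((hwconf i).2 h)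
        have h1 : 0 < w i * c i := lt_of_le_of_ne (hwconf i).1
          (by simp [mul_ne_zero hwi hci]; tauto)
        rcases hwi.lt_or_gt with hw | hw
        · have : c i < 0 := by nlinarith
          exact div_pos_of_neg_of_neg this hw
        · have : 0 < c i := by nlinarith
          exact div_pos this hw
      have htpos : 0 < t := hratpos i₁ hwi₁
      set c' : Fin m → ℝ := fun i => c i - t * w i with hc'
      have hc'cert : IsCert u J K c' := by
        refine ⟨?_, ?_, ?_⟩
        · calc ∑ i, c' i • u i
              = ∑ i, (c i • u i - t • (w i • u i)) := by
                refine Finset.sum_congr rfl fun i _ => ?_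
                show (c i - t * w i) • u i = _
                rw [sub_smul, smul_smul]
            _ = ∑ i, c i • u i - t • ∑ i, w i • u i := by
                rw [Finset.sum_sub_distrib, Finset.smul_sum]
            _ = 0 := by rw [hc.1, hwcirc.1, smul_zero, sub_zero]
        · intro j hj
          show 0 ≤ c j - t * w j
          by_cases hwj : w j = 0
          · rw [hwj, mul_zero, sub_zero]; exact hc.2.1 j hj
          · have h1 : 0 < w j := lt_of_le_of_ne (hwJ j hj) (Ne.symm hwj)
            have h2 : t ≤ c j / w j := hmin j (by simp [hwj])
            have := (le_div_iff₀ h1).mp h2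
            linarith
        · intro k hk
          show c k - t * w k ≤ 0
          by_cases hwk : w k = 0
          · rw [hwk, mul_zero, sub_zero]; exact hc.2.2 k hk
          · have h1 : w k < 0 := lt_of_le_of_ne (hwK k hk) hwk
            have h2 : t ≤ c k / w k := hmin k (by simp [hwk])
            have h3 : c k / w k * w k = c k := div_mul_cancel₀ _ hwk
            nlinarith
      have hc'i₁ : c' i₁ = 0 := by
        show c i₁ - t * w i₁ = 0
        rw [ht, div_mul_cancel₀ _ hwi₁, sub_self]
      have hcard' : (Finset.univ.filter fun i => c' i ≠ 0).card ≤ N := by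
        have hsub : (Finset.univ.filter fun i => c' i ≠ 0) ⊆
            (Finset.univ.filter fun i => c i ≠ 0).erase i₁ := by
          intro i hi
          simp only [Finset.mem_filter, Finset.mem_univ, true_and] at hi
          rw [Finset.mem_erase]
          refine ⟨fun h => by rw [h] at hi; exact hi hc'i₁, ?_⟩
          simp only [Finset.mem_filter, Finset.mem_univ, true_and]
          intro h
          apply hi
          show c i - t * w i = 0
          rw [h, (hwconf i).2 h, mul_zero, sub_zero]
        have h1 := Finset.card_le_card hsub
        have h2 : i₁ ∈ Finset.univ.filter fun i => c i ≠ 0 := by simp [hci₁]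
        have h3 := Finset.card_erase_of_mem h2
        omega
      have hc'b := ih c' hc'cert hcard'
      have hdec : dotm c' b = dotm c b - t * dotm w b := by
        simp only [dotm, hc', sub_mul, Finset.sum_sub_distrib, Finset.mul_sum, mul_assoc]
      nlinarith
lemma euclid_sum_single {m : ℕ} (w : Euc m) :
    ∑ i, (w i) • EuclideanSpace.single i (1:ℝ) = w := by
  ext i
  rw [WithLp.ofLp_sum, Finset.sum_apply]
  simp [EuclideanSpace.single_apply]

/-- Farkas-type feasibility lemma for the polyhedron. -/
lemma farkas_poly {n m : ℕ} (u : Fin m → Euc n) (I J K : Set (Fin m))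
    (hIJK : IsTripartition I J K) (b : Fin m → ℝ)
    (hcert : ∀ c : Fin m → ℝ, IsCert u J K c → 0 ≤ dotm c b) :
    (poly u b I J K).Nonempty := by
  classical
  set T : Euc n → Euc m := fun z => WithLp.toLp 2 (fun i => ⟪u i, z⟫) with hT
  set sing : Fin m → Euc m := fun i => EuclideanSpace.single i (1:ℝ) with hsing
  set g : Fin m → Euc m :=
    fun i => if i ∈ J then sing i else if i ∈ K then -sing i else 0 with hg
  set v : (Fin n ⊕ Fin n ⊕ Fin m) → Euc m :=
    Sum.elim (fun r => T (EuclideanSpace.single r 1))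
      (Sum.elim (fun r => -T (EuclideanSpace.single r 1)) g) with hv
  have hTapp : ∀ (z : Euc n) (i : Fin m), T z i = ⟪u i, z⟫ := fun z i => rfl
  have hTlin : ∀ (mu : Fin n → ℝ), ∑ r, mu r • T (EuclideanSpace.single r 1)
      = T (∑ r, mu r • EuclideanSpace.single r (1:ℝ)) := by
    intro mu
    ext i
    rw [WithLp.ofLp_sum, Finset.sum_apply]
    have h1 : ∀ r, (mu r • T (EuclideanSpace.single r 1)) i
        = mu r * ⟪u i, EuclideanSpace.single r 1⟫ := fun r => rfl
    simp_rw [h1, hTapp, inner_sum, real_inner_smul_right]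
  have hTS : ∀ z : Euc n, T z ∈ fgCone v := by
    intro z
    refine ⟨Sum.elim (fun r => max (z r) 0)
      (Sum.elim (fun r => max (-(z r)) 0) (fun _ => 0)), ?_, ?_⟩
    · rintro (r | r | i) <;> simp [le_max_right]
    · rw [Fintype.sum_sum_type, Fintype.sum_sum_type]
      simp only [Sum.elim_inl, Sum.elim_inr, hv]
      have h2 : ∀ r, max (-(z r)) 0 • (-T (EuclideanSpace.single r 1))
          = (-(max (-(z r)) 0)) • T (EuclideanSpace.single r 1) := by
        intro r; rw [smul_neg, neg_smul]
      simp_rw [h2, zero_smul, Finset.sum_const_zero, add_zero]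
      rw [← Finset.sum_add_distrib]
      have h3 : ∀ r, max (z r) 0 • T (EuclideanSpace.single r 1) +
          (-(max (-(z r)) 0)) • T (EuclideanSpace.single r 1)
          = z r • T (EuclideanSpace.single r 1) := by
        intro r
        rw [← add_smul]
        congr 1
        rcases le_total (z r) 0 with h | h
        · rw [max_eq_right h, max_eq_left (by linarith)]; ring
        · rw [max_eq_left h, max_eq_right (by linarith)]; ring
      simp_rw [h3]
      rw [hTlin, euclid_sum_single]
  have hgS : ∀ i₀ : Fin m, g i₀ ∈ fgCone v := by
    intro i₀
    refine ⟨fun i => if i = Sum.inr (Sum.inr i₀) then 1 else 0,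
      fun i => by by_cases h : i = Sum.inr (Sum.inr i₀) <;> simp [h], ?_⟩
    rw [Finset.sum_eq_single (Sum.inr (Sum.inr i₀))]
    · simp [hv]
    · intro i _ hne
      show (if i = Sum.inr (Sum.inr i₀) then (1:ℝ) else 0) • v i = 0
      rw [if_neg hne, zero_smul]
    · intro h; exact absurd (Finset.mem_univ _) h
  -- Main claim: b (as a Euclidean vector) lies in the cone
  set bE : Euc m := WithLp.toLp 2 (fun i => b i) with hbE
  have hbS : bE ∈ fgCone v := by
    by_contra hbnot
    obtain ⟨f, u₀, hfS, hfb⟩ := geometric_hahn_banach_closed_point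
      (convex_fgCone v) (isClosed_fgCone v) hbnot
    have hu₀ : 0 < u₀ := by
      have := hfS 0 (zero_mem_fgCone v)
      rwa [map_zero] at this
    have hle : ∀ w ∈ fgCone v, f w ≤ 0 := by
      intro w hw
      by_contra hpos
      push_neg at hpos
      have ht : (0:ℝ) ≤ (u₀ + 1) / f w := by positivity
      have := hfS _ (smul_mem_fgCone v ht hw)
      rw [map_smul, smul_eq_mul, div_mul_cancel₀ _ (ne_of_gt hpos)] at this
      linarith
    set y : Fin m → ℝ := fun i => -f (sing i) with hy
    have hdoty : ∀ w : Euc m, dotm y w = -f w := by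
      intro w
      have h1 : dotm y w = -∑ i, f ((w i) • sing i) := by
        simp only [dotm, hy, map_smul, smul_eq_mul]
        rw [← Finset.sum_neg_distrib]
        exact Finset.sum_congr rfl fun i _ => by ring
      rw [h1, ← map_sum, hsing]
      rw [euclid_sum_single w]
    have hyJ : ∀ j ∈ J, 0 ≤ y j := by
      intro j hj
      have h1 : g j = sing j := by rw [hg]; simp [hj]
      have := hle (g j) (hgS j)
      rw [h1] at this
      simp only [hy]
      linarith
    have hyK : ∀ k ∈ K, y k ≤ 0 := by
      intro k hk
      have hkJ : k ∉ J := fun h => (hIJK.2.2.2.le_bot ⟨h, hk⟩ : k ∈ (⊥ : Set (Fin m)))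
      have h1 : g k = -sing k := by rw [hg]; simp [hkJ, hk]
      have := hle (g k) (hgS k)
      rw [h1, map_neg] at this
      simp only [hy]
      linarith
    have hyker : ∑ i, y i • u i = 0 := by
      set q : Euc n := ∑ i, y i • u i with hq
      have hqz : ∀ z : Euc n, ⟪q, z⟫ = -f (T z) := by
        intro z
        rw [hq, ← dotm_inner]
        rw [← hdoty (T z)]
        exact Finset.sum_congr rfl fun i _ => by rw [hTapp]
      have hq2 : ⟪q, q⟫ ≤ 0 := by
        have h1 := hqz (-q)
        have h2 : 0 ≤ -f (T (-q)) := neg_nonneg.mpr (hle _ (hTS (-q)))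
        rw [inner_neg_right] at h1
        linarith
      have := real_inner_self_nonpos.mp hq2
      exact this
    have hycert : IsCert u J K y := ⟨hyker, hyJ, hyK⟩
    have h0 := hcert y hycert
    have hb2 : dotm y bE = -f bE := hdoty bE
    have hbb : dotm y b = dotm y bE := rfl
    rw [hbb, hb2] at h0
    linarith
  -- extract the feasible point
  obtain ⟨lam, hlam, hsum⟩ := hbS
  set z' : Euc n := ∑ r, (lam (Sum.inl r) - lam (Sum.inr (Sum.inl r))) •
    EuclideanSpace.single r (1:ℝ) with hz'
  set d : Euc m := ∑ i, lam (Sum.inr (Sum.inr i)) • g i with hd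
  have hdecomp : bE = T z' + d := by
    rw [hsum, Fintype.sum_sum_type, Fintype.sum_sum_type]
    simp only [Sum.elim_inl, Sum.elim_inr, hv]
    have h2 : ∀ r, lam (Sum.inr (Sum.inl r)) • (-T (EuclideanSpace.single r 1))
        = (-(lam (Sum.inr (Sum.inl r)))) • T (EuclideanSpace.single r 1) := by
      intro r; rw [smul_neg, neg_smul]
    simp_rw [h2]
    rw [← add_assoc, ← Finset.sum_add_distrib]
    have h3 : ∀ r, lam (Sum.inl r) • T (EuclideanSpace.single r 1) +
        (-(lam (Sum.inr (Sum.inl r)))) • T (EuclideanSpace.single r 1)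
        = (lam (Sum.inl r) - lam (Sum.inr (Sum.inl r))) • T (EuclideanSpace.single r 1) := by
      intro r; rw [sub_smul, neg_smul, ← sub_eq_add_neg]
    simp_rw [h3]
    rw [hTlin, hz', hd]
  have hdcoord : ∀ i, d i = lam (Sum.inr (Sum.inr i)) * (g i i) := by
    intro i
    rw [hd, WithLp.ofLp_sum, Finset.sum_apply]
    rw [Finset.sum_eq_single i]
    · rfl
    · intro i' _ hne
      have hgz : g i' i = 0 := by
        by_cases h1 : i' ∈ J
        · simp [hg, h1, hsing, EuclideanSpace.single_apply, hne, Ne.symm hne]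
        · by_cases h2 : i' ∈ K
          · simp [hg, h1, h2, hsing, EuclideanSpace.single_apply, hne, Ne.symm hne]
          · simp [hg, h1, h2]
      show lam (Sum.inr (Sum.inr i')) * (g i' i) = 0
      rw [hgz, mul_zero]
    · intro h; exact absurd (Finset.mem_univ _) h
  have hcoord : ∀ i, b i = ⟪u i, z'⟫ + lam (Sum.inr (Sum.inr i)) * (g i i) := by
    intro i
    have h1 : bE i = (T z' + d) i := by rw [hdecomp]
    have h2 : (T z' + d) i = T z' i + d i := rfl
    rw [h2, hTapp, hdcoord] at h1
    exact h1
  refine ⟨z', ?_, ?_, ?_⟩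
  · intro i hi
    have hiJ : i ∉ J := fun h => (hIJK.2.1.le_bot ⟨hi, h⟩ : i ∈ (⊥ : Set (Fin m)))
    have hiK : i ∉ K := fun h => (hIJK.2.2.1.le_bot ⟨hi, h⟩ : i ∈ (⊥ : Set (Fin m)))
    have hgii : g i i = 0 := by rw [hg]; simp [hiJ, hiK]
    have := hcoord i
    rw [hgii, mul_zero, add_zero] at this
    exact this.symm
  · intro j hj
    have hgjj : g j j = 1 := by
      rw [hg]; simp [hj, hsing, EuclideanSpace.single_apply]
    have := hcoord j
    rw [hgjj, mul_one] at this
    have hl := hlam (Sum.inr (Sum.inr j))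
    linarith
  · intro k hk
    have hkJ : k ∉ J := fun h => (hIJK.2.2.2.le_bot ⟨h, hk⟩ : k ∈ (⊥ : Set (Fin m)))
    have hgkk : g k k = -1 := by
      rw [hg]; simp [hkJ, hk, hsing, EuclideanSpace.single_apply]
    have := hcoord k
    rw [hgkk] at this
    have hl := hlam (Sum.inr (Sum.inr k))
    nlinarith

theorem poly_nonempty_of_memMinFace {n m : ℕ} (hn : 1 ≤ n) (hm : 1 ≤ m)
    (u : Fin m → Euc n) (hu : ∀ i, u i ≠ 0)
    (a b : Fin m → ℝ) (hb : MemMinFace u a b)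
    (I J K : Set (Fin m)) (hIJK : IsTripartition I J K)
    (hne : (poly u a I J K).Nonempty) :
    (poly u b I J K).Nonempty := by
  classical
  obtain ⟨x₀, hx₀⟩ := hne
  apply farkas_poly u I J K hIJK b
  intro c hc
  exact cert_dotm_b_nonneg hb hIJK hx₀ ((Finset.univ.filter fun i => c i ≠ 0).card) c hc le_rfl
end
end
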